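/- arXiv:2210.15341 — 3 statements merged into one kernel-verified Lean document; each statement's English description precedes it below -/
import Mathlib

section
/- (Urysohn's lemma for a-spaces.) Let A and B be disjoint closed subsets of an a-normal space X with denominator function ζ, and let α ≤ β be real numbers. Suppose that X ⊆ AC([α,β]), A ⊆ AC({α}), and B ⊆ AC({β}). Then there exists a continuous function f : X → [α,β] with den(f(x)) dividing ζ(x) for all x ∈ X, such that f(x) = α for all x ∈ A and f(x) = β for all x ∈ B. -/
open Classical in
/-- The denominator of a real number: the reduced denominator if rational, `0` if irrational. -/
noncomputable def den (r : ℝ) : ℕ :=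
  if h : ∃ q : ℚ, (q : ℝ) = r then h.choose.den else 0

/-- `AC ζ Λ`: the points of the a-space `(X, ζ)` that may be sent into `Λ ⊆ ℝ` by a
denominator-decreasing map. -/
def AC {X : Type*} (ζ : X → ℕ) (Λ : Set ℝ) : Set X := {x | ∃ l ∈ Λ, den l ∣ ζ x}

/-- An a-normal space structure on a topological space `X` with denominator function `ζ`. -/
def ANormal {X : Type*} [TopologicalSpace X] (ζ : X → ℕ) : Prop :=
  CompactSpace X ∧ T2Space X ∧
  (∀ n : ℕ, IsClosed {x : X | ζ x ∣ n}) ∧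
  ∀ x y : X, x ≠ y → ∃ U V : Set X, IsOpen U ∧ IsOpen V ∧ x ∈ U ∧ y ∈ V ∧
    Disjoint U V ∧ ∀ z ∈ (U ∪ V)ᶜ, ζ z = 0

lemma den_ratCast (q : ℚ) : den (q : ℝ) = q.den := by
  unfold den
  have h : ∃ p : ℚ, (p : ℝ) = (q : ℝ) := ⟨q, rfl⟩
  rw [dif_pos h]
  have := h.choose_spec
  have : h.choose = q := by exact_mod_cast this
  rw [this]

lemma den_dvd_iff {d : ℕ} (hd : 0 < d) {r : ℝ} : den r ∣ d ↔ ∃ j : ℤ, r = j / d := by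
  constructor
  · intro hdvd
    unfold den at hdvd
    split_ifs at hdvd with h
    · set p := h.choose with hp
      obtain ⟨c, hc⟩ := hdvd
      refine ⟨p.num * c, ?_⟩
      rw [← h.choose_spec]
      have hd0 : (d:ℝ) ≠ 0 := by positivity
      have hc0 : (p.den : ℝ) ≠ 0 := by
        exact_mod_cast p.den_ne_zero
      rw [eq_div_iff hd0]
      have hpr : ((p:ℚ):ℝ) = (p.num : ℝ) / (p.den : ℝ) := by
        rw [Rat.cast_def]
      rw [hpr, hc]
      push_cast
      field_simp
    · exfalso; rw [zero_dvd_iff] at hdvd; omega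
  · rintro ⟨j, rfl⟩
    have hd0 : (d:ℚ) ≠ 0 := by exact_mod_cast hd.ne'
    have h1 : ((((j:ℚ)/(d:ℚ)) : ℚ) : ℝ) = (j : ℝ) / d := by push_cast; ring
    rw [← h1, den_ratCast]
    have := Rat.den_dvd j d
    rw [Rat.divInt_eq_div] at this
    have h2 : (((j:ℚ)/(d:ℚ)).den : ℤ) ∣ (d:ℤ) := by exact_mod_cast this
    exact_mod_cast h2

lemma asep_pt {X : Type*} [TopologicalSpace X] {ζ : X → ℕ} (hX : ANormal ζ)
    {x : X} {C : Set X} (hC : IsClosed C) (hx : x ∉ C) :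
    ∃ U V : Set X, IsOpen U ∧ IsOpen V ∧ x ∈ U ∧ C ⊆ V ∧ Disjoint U V ∧
      ∀ z ∈ (U ∪ V)ᶜ, ζ z = 0 := by
  obtain ⟨hcomp, ht2, hN2, hN3⟩ := hX
  choose! U V hUo hVo hxU hyV hdisj hz using fun y (h : x ≠ y) => hN3 x y h
  have hne : ∀ y ∈ C, x ≠ y := fun y hy h => hx (h ▸ hy)
  have hCc : IsCompact C := hC.isCompact
  have hcov : C ⊆ ⋃ y ∈ C, V y := fun y hy => Set.mem_biUnion hy (hyV y (hne y hy))
  obtain ⟨s, hsC, hsfin, hscov⟩ := hCc.elim_finite_subcover_image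
    (fun y hy => hVo y (hne y hy)) hcov
  refine ⟨⋂ y ∈ s, U y, ⋃ y ∈ s, V y, ?_, ?_, ?_, hscov, ?_, ?_⟩
  · exact hsfin.isOpen_biInter (fun y hy => hUo y (hne y (hsC hy)))
  · exact isOpen_biUnion (fun y hy => hVo y (hne y (hsC hy)))
  · exact Set.mem_biInter (fun y hy => hxU y (hne y (hsC hy)))
  · rw [Set.disjoint_iff]
    rintro z ⟨hz1, hz2⟩
    obtain ⟨y, hy, hzy⟩ := Set.mem_iUnion₂.1 hz2
    exact (hdisj y (hne y (hsC hy))).le_bot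
      ⟨Set.mem_iInter₂.1 hz1 y hy, hzy⟩ |>.elim
  · intro z hzc
    rw [Set.mem_compl_iff, Set.mem_union] at hzc
    push_neg at hzc
    obtain ⟨h1, h2⟩ := hzc
    rw [Set.mem_iInter₂] at h1
    push_neg at h1
    obtain ⟨y, hy, hzU⟩ := h1
    have hzV : z ∉ V y := fun h => h2 (Set.mem_biUnion hy h)
    exact hz y (hne y (hsC hy)) z (by simp [hzU, hzV])

lemma asep {X : Type*} [TopologicalSpace X] {ζ : X → ℕ} (hX : ANormal ζ)
    {C D : Set X} (hC : IsClosed C) (hD : IsClosed D) (hCD : Disjoint C D) :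
    ∃ U V : Set X, IsOpen U ∧ IsOpen V ∧ C ⊆ U ∧ D ⊆ V ∧ Disjoint U V ∧
      ∀ z ∈ (U ∪ V)ᶜ, ζ z = 0 := by
  haveI : CompactSpace X := hX.1
  choose! U V hUo hVo hxU hDV hdisj hz using
    fun x (h : x ∉ D) => asep_pt hX hD h
  have hne : ∀ x ∈ C, x ∉ D := fun x hx h => (hCD.le_bot ⟨hx, h⟩).elim
  have hcov : C ⊆ ⋃ x ∈ C, U x := fun x hx => Set.mem_biUnion hx (hxU x (hne x hx))
  obtain ⟨s, hsC, hsfin, hscov⟩ := hC.isCompact.elim_finite_subcover_image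
    (fun x hx => hUo x (hne x hx)) hcov
  refine ⟨⋃ x ∈ s, U x, ⋂ x ∈ s, V x, ?_, ?_, hscov, ?_, ?_, ?_⟩
  · exact isOpen_biUnion (fun x hx => hUo x (hne x (hsC hx)))
  · exact hsfin.isOpen_biInter (fun x hx => hVo x (hne x (hsC hx)))
  · exact fun d hd => Set.mem_biInter (fun x hx => hDV x (hne x (hsC hx)) hd)
  · rw [Set.disjoint_iff]
    rintro z ⟨hz1, hz2⟩
    obtain ⟨x, hx, hzx⟩ := Set.mem_iUnion₂.1 hz1
    exact (hdisj x (hne x (hsC hx))).le_bot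
      ⟨hzx, Set.mem_iInter₂.1 hz2 x hx⟩ |>.elim
  · intro z hzc
    rw [Set.mem_compl_iff, Set.mem_union] at hzc
    push_neg at hzc
    obtain ⟨h1, h2⟩ := hzc
    rw [Set.mem_iInter₂] at h2
    push_neg at h2
    obtain ⟨x, hx, hzV⟩ := h2
    have hzU : z ∉ U x := fun h => h1 (Set.mem_biUnion hx h)
    exact hz x (hne x (hsC hx)) z (by simp [hzU, hzV])

/-- grid lemmas -/
lemma grid_up {m : ℕ} (hm : 0 < m) (x : ℝ) :
    ∃ v : ℝ, (∃ j : ℤ, v = j / m) ∧ x < v ∧ v ≤ x + 1/m := by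
  have hm0 : (0:ℝ) < m := by exact_mod_cast hm
  refine ⟨(⌊x * m⌋ + 1) / m, ⟨⌊x * m⌋ + 1, by push_cast; ring⟩, ?_, ?_⟩
  · rw [lt_div_iff₀ hm0]
    have := Int.lt_floor_add_one (x * m)
    push_cast
    linarith
  · rw [div_le_iff₀ hm0]
    have := Int.floor_le (x * m)
    have : (⌊x * m⌋ : ℝ) ≤ x * m := this
    push_cast
    rw [add_mul, one_div, inv_mul_cancel₀ hm0.ne']
    linarith

lemma grid_down {m : ℕ} (hm : 0 < m) (x : ℝ) :
    ∃ v : ℝ, (∃ j : ℤ, v = j / m) ∧ x - 1/m < v ∧ v ≤ x := by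
  have hm0 : (0:ℝ) < m := by exact_mod_cast hm
  refine ⟨⌊x * m⌋ / m, ⟨⌊x * m⌋, rfl⟩, ?_, ?_⟩
  · rw [lt_div_iff₀ hm0]
    have := Int.lt_floor_add_one (x * m)
    rw [sub_mul, one_div, inv_mul_cancel₀ hm0.ne']
    linarith
  · rw [div_le_iff₀ hm0]
    exact Int.floor_le (x * m)

/-- The invariant for the recursive construction. -/
structure AInv {X : Type*} [TopologicalSpace X] (ζ : X → ℕ) (A B : Set X) (α β : ℝ)
    (e : ℕ → ℝ) (k : ℕ) (V : ℕ → Set X) : Prop where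
  opn : ∀ i < k, IsOpen (V i)
  nest : ∀ i < k, ∀ j < k, e i < e j → closure (V i) ⊆ V j
  memA : ∀ i < k, A ⊆ V i
  memB : ∀ i < k, Disjoint B (closure (V i))
  clean : ∀ z : X, ζ z ≠ 0 → ∀ i < k, z ∈ V i ∨ z ∉ closure (V i)
  kinv : ∀ z : X, ζ z ≠ 0 → ∃ v : ℝ, α ≤ v ∧ v ≤ β ∧ den v ∣ ζ z ∧
    (∀ i < k, z ∈ V i → v ≤ e i) ∧ (∀ i < k, z ∉ V i → e i < v)


section Step
variable {X : Type*} [TopologicalSpace X] {ζ : X → ℕ} {A B : Set X} {α β : ℝ} {e : ℕ → ℝ}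

lemma astep (hX : ANormal ζ) (hA : IsClosed A) (hB : IsClosed B) (hAB : Disjoint A B)
    (hab : α < β)
    (hAac : ∀ z ∈ A, den α ∣ ζ z) (hBac : ∀ z ∈ B, den β ∣ ζ z)
    (he1 : ∀ n, α < e n ∧ e n < β)
    (k : ℕ) (V : ℕ → Set X) (h : AInv ζ A B α β e k V) :
    ∃ U : Set X, AInv ζ A B α β e (k+1) (fun i => if i = k then U else V i) := by
  by_cases hdup : ∃ i, i < k ∧ e i = e k
  · -- duplicate level: copy the old set
    obtain ⟨i₀, hi₀k, hi₀e⟩ := hdup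
    refine ⟨V i₀, ?_, ?_, ?_, ?_, ?_, ?_⟩
    · intro i hi
      rcases Nat.lt_succ_iff_lt_or_eq.1 hi with hi | rfl
      · simpa [Nat.ne_of_lt hi] using h.opn i hi
      · simpa using h.opn i₀ hi₀k
    · intro i hi j hj hij
      rcases Nat.lt_succ_iff_lt_or_eq.1 hi with hi | rfl <;>
        rcases Nat.lt_succ_iff_lt_or_eq.1 hj with hj | rfl
      · simpa [Nat.ne_of_lt hi, Nat.ne_of_lt hj] using h.nest i hi j hj hij
      · simp only [if_pos rfl, if_neg (Nat.ne_of_lt hi)]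
        exact h.nest i hi i₀ hi₀k (by rw [hi₀e]; exact hij)
      · simp only [if_pos rfl, if_neg (Nat.ne_of_lt hj)]
        exact h.nest i₀ hi₀k j hj (by rw [hi₀e]; exact hij)
      · exact absurd hij (lt_irrefl _)
    · intro i hi
      rcases Nat.lt_succ_iff_lt_or_eq.1 hi with hi | rfl
      · simpa [Nat.ne_of_lt hi] using h.memA i hi
      · simpa using h.memA i₀ hi₀k
    · intro i hi
      rcases Nat.lt_succ_iff_lt_or_eq.1 hi with hi | rfl
      · simpa [Nat.ne_of_lt hi] using h.memB i hi
      · simpa using h.memB i₀ hi₀k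
    · intro z hz i hi
      rcases Nat.lt_succ_iff_lt_or_eq.1 hi with hi | rfl
      · simpa [Nat.ne_of_lt hi] using h.clean z hz i hi
      · simpa using h.clean z hz i₀ hi₀k
    · intro z hz
      obtain ⟨v, hv1, hv2, hv3, hv4, hv5⟩ := h.kinv z hz
      refine ⟨v, hv1, hv2, hv3, ?_, ?_⟩
      · intro i hi
        rcases Nat.lt_succ_iff_lt_or_eq.1 hi with hi | rfl
        · simpa [Nat.ne_of_lt hi] using hv4 i hi
        · simp only [if_pos rfl]
          intro hzi
          rw [← hi₀e]
          exact hv4 i₀ hi₀k hzi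
      · intro i hi
        rcases Nat.lt_succ_iff_lt_or_eq.1 hi with hi | rfl
        · simpa [Nat.ne_of_lt hi] using hv5 i hi
        · simp only [if_pos rfl]
          intro hzi
          rw [← hi₀e]
          exact hv5 i₀ hi₀k hzi
  · push_neg at hdup
    have hrα : α < e k := (he1 k).1
    have hrβ : e k < β := (he1 k).2
    set r := e k with hrdef
    set LS : Set ℕ := {i | i < k ∧ e i < r} with hLS
    set HS : Set ℕ := {i | i < k ∧ r < e i} with hHS
    have hLSfin : LS.Finite := (Set.finite_lt_nat k).subset (fun i hi => hi.1)
    have hHSfin : HS.Finite := (Set.finite_lt_nat k).subset (fun i hi => hi.1)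
    have hsplit : ∀ i, i < k → e i < r ∨ r < e i := fun i hi =>
      lt_or_gt_of_ne (hdup i hi)
    set CandLow : ℕ → Prop := fun m => ∃ v : ℝ, den v ∣ m ∧ α ≤ v ∧ v ≤ r ∧
      ∀ i ∈ LS, e i < v with hCL
    set CandUp : ℕ → Prop := fun m => ∃ v : ℝ, den v ∣ m ∧ r < v ∧ v ≤ β ∧
      ∀ i ∈ HS, v ≤ e i with hCU
    set Mi : Set ℕ := {m | 0 < m ∧ ¬ CandUp m} with hMi
    set Mo : Set ℕ := {m | 0 < m ∧ ¬ CandLow m} with hMo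
    -- finiteness of Mi
    have hMiFin : Mi.Finite := by
      set SU : Set ℝ := insert (β - r) ((fun i => e i - r) '' HS) with hSU
      have hSUfin : SU.Finite := (hHSfin.image _).insert _
      have hSUne : SU.Nonempty := ⟨β - r, Set.mem_insert _ _⟩
      have hεU_mem : sInf SU ∈ SU := hSUne.csInf_mem hSUfin
      set εU := sInf SU with hεU
      have hεU_pos : 0 < εU := by
        rcases hεU_mem with h1 | h1
        · rw [h1]; linarith
        · obtain ⟨i, hi, hie⟩ := h1
          have hie' : e i - r = εU := hie
          rw [← hie']; have := hi.2; linarith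
      have hεU_le : ∀ s ∈ SU, εU ≤ s := fun s hs => csInf_le hSUfin.bddBelow hs
      have hCUlarge : ∀ m : ℕ, 0 < m → 1/(m:ℝ) < εU → CandUp m := by
        intro m hm hlt
        obtain ⟨v, hvj, hv1, hv2⟩ := grid_up hm r
        refine ⟨v, (den_dvd_iff hm).2 hvj, hv1, ?_, ?_⟩
        · have := hεU_le _ (Set.mem_insert _ _); linarith
        · intro i hi
          have h9 : εU ≤ e i - r := hεU_le _ (Set.mem_insert_of_mem _ ⟨i, hi, rfl⟩)
          linarith
      apply (Set.finite_Iic ⌈εU⁻¹⌉₊).subset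
      intro m hm
      simp only [Set.mem_Iic]
      by_contra hgt
      push_neg at hgt
      have h0 : 0 < m := hm.1
      have h1 : εU⁻¹ < (m:ℝ) := lt_of_le_of_lt (Nat.le_ceil _) (by exact_mod_cast hgt)
      have h2 : 1/(m:ℝ) < εU := by
        rw [one_div]
        have hm0 : (0:ℝ) < m := by exact_mod_cast h0
        exact (inv_lt_comm₀ hεU_pos hm0).mp h1
      exact hm.2 (hCUlarge m h0 h2)
    -- finiteness of Mo
    have hMoFin : Mo.Finite := by
      set SL0 : Set ℝ := insert (r - α) ((fun i => r - e i) '' LS) with hSL0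
      have hSUfin : SL0.Finite := (hLSfin.image _).insert _
      have hSUne : SL0.Nonempty := ⟨r - α, Set.mem_insert _ _⟩
      have hεL_mem : sInf SL0 ∈ SL0 := hSUne.csInf_mem hSUfin
      set εL := sInf SL0 with hεL
      have hεL_pos : 0 < εL := by
        rcases hεL_mem with h1 | h1
        · rw [h1]; linarith
        · obtain ⟨i, hi, hie⟩ := h1
          have hie' : r - e i = εL := hie
          rw [← hie']; have := hi.2; linarith
      have hεL_le : ∀ s ∈ SL0, εL ≤ s := fun s hs => csInf_le hSUfin.bddBelow hs
      have hCLlarge : ∀ m : ℕ, 0 < m → 1/(m:ℝ) < εL → CandLow m := by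
        intro m hm hlt
        obtain ⟨v, hvj, hv1, hv2⟩ := grid_down hm r
        refine ⟨v, (den_dvd_iff hm).2 hvj, ?_, hv2, ?_⟩
        · have := hεL_le _ (Set.mem_insert _ _); linarith
        · intro i hi
          have h9 : εL ≤ r - e i := hεL_le _ (Set.mem_insert_of_mem _ ⟨i, hi, rfl⟩)
          linarith
      apply (Set.finite_Iic ⌈εL⁻¹⌉₊).subset
      intro m hm
      simp only [Set.mem_Iic]
      by_contra hgt
      push_neg at hgt
      have h0 : 0 < m := hm.1
      have h1 : εL⁻¹ < (m:ℝ) := lt_of_le_of_lt (Nat.le_ceil _) (by exact_mod_cast hgt)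
      have h2 : 1/(m:ℝ) < εL := by
        rw [one_div]
        have hm0 : (0:ℝ) < m := by exact_mod_cast h0
        exact (inv_lt_comm₀ hεL_pos hm0).mp h1
      exact hm.2 (hCLlarge m h0 h2)
    -- closed sets
    have hFcl : ∀ m : ℕ, IsClosed {x : X | ζ x ∣ m} := hX.2.2.1
    set Hin : Set X := ⋃ m ∈ Mi, {x : X | ζ x ∣ m} with hHin
    set Hout : Set X := ⋃ m ∈ Mo, {x : X | ζ x ∣ m} with hHout
    have hHinCl : IsClosed Hin := hMiFin.isClosed_biUnion (fun m _ => hFcl m)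
    have hHoutCl : IsClosed Hout := hMoFin.isClosed_biUnion (fun m _ => hFcl m)
    set SL : Set X := (⋂ i ∈ LS, (V i)ᶜ) ∩ ⋂ i ∈ HS, closure (V i) with hSLdef
    have hSLcl : IsClosed SL :=
      (isClosed_biInter (fun i hi => (h.opn i hi.1).isClosed_compl)).inter
        (isClosed_biInter (fun i _ => isClosed_closure))
    have hSLlow : ∀ z ∈ SL, ∀ i ∈ LS, z ∉ V i := by
      intro z hz i hi
      have := Set.mem_iInter₂.1 hz.1 i hi
      exact this
    have hSLhigh : ∀ z ∈ SL, ζ z ≠ 0 → ∀ i ∈ HS, z ∈ V i := by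
      intro z hz hζ i hi
      have h1 := Set.mem_iInter₂.1 hz.2 i hi
      rcases h.clean z hζ i hi.1 with h2 | h2
      · exact h2
      · exact absurd h1 h2
    have hnSL : ∀ z : X, z ∉ SL → (∃ i ∈ LS, z ∈ V i) ∨ (∃ i ∈ HS, z ∉ closure (V i)) := by
      intro z hz
      by_contra hcon
      push_neg at hcon
      exact hz ⟨Set.mem_iInter₂.2 (fun i hi => hcon.1 i hi),
        Set.mem_iInter₂.2 (fun i hi => hcon.2 i hi)⟩
    -- the candidate dichotomy for points of SL
    have hSLcand : ∀ z ∈ SL, ζ z ≠ 0 → CandLow (ζ z) ∨ CandUp (ζ z) := by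
      intro z hz hζ
      obtain ⟨v, hv1, hv2, hv3, hv4, hv5⟩ := h.kinv z hζ
      rcases le_or_gt v r with hvr | hvr
      · exact Or.inl ⟨v, hv3, hv1, hvr, fun i hi => hv5 i hi.1 (hSLlow z hz i hi)⟩
      · exact Or.inr ⟨v, hv3, hvr, hv2, fun i hi => hv4 i hi.1 (hSLhigh z hz hζ i hi)⟩
    have hCLmono : ∀ d m : ℕ, d ∣ m → CandLow d → CandLow m := by
      rintro d m hdm ⟨v, hv1, hv⟩; exact ⟨v, hv1.trans hdm, hv⟩
    have hCUmono : ∀ d m : ℕ, d ∣ m → CandUp d → CandUp m := by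
      rintro d m hdm ⟨v, hv1, hv⟩; exact ⟨v, hv1.trans hdm, hv⟩
    set Atil : Set X := A ∪ (⋃ i ∈ LS, closure (V i)) ∪ (Hin ∩ SL) with hAtil
    set Btil : Set X := B ∪ (⋃ i ∈ HS, (V i)ᶜ) ∪ (Hout ∩ SL) with hBtil
    have hAtilCl : IsClosed Atil :=
      (hA.union (hLSfin.isClosed_biUnion (fun i _ => isClosed_closure))).union
        (hHinCl.inter hSLcl)
    have hBtilCl : IsClosed Btil :=
      (hB.union (hHSfin.isClosed_biUnion (fun i hi => (h.opn i hi.1).isClosed_compl))).union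
        (hHoutCl.inter hSLcl)
    have hζnz : ∀ (z : X) (m : ℕ), ζ z ∣ m → 0 < m → ζ z ≠ 0 := by
      intro z m hd hm h0
      rw [h0] at hd
      have := Nat.eq_zero_of_zero_dvd hd
      omega
    have hdisjT : Disjoint Atil Btil := by
      rw [Set.disjoint_left]
      rintro z hz1 hz2
      rcases hz1 with (hz1 | hz1) | hz1 <;> rcases hz2 with (hz2 | hz2) | hz2
      · exact Set.disjoint_left.mp hAB hz1 hz2
      · obtain ⟨i, hi, hzc⟩ := Set.mem_iUnion₂.1 hz2
        exact hzc (h.memA i hi.1 hz1)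
      · obtain ⟨hzo, hzsl⟩ := hz2
        obtain ⟨m, hm, hzm⟩ := Set.mem_iUnion₂.1 hzo
        rcases Set.eq_empty_or_nonempty LS with hLSe | ⟨i, hi⟩
        · refine hm.2 ⟨α, dvd_trans (hAac z hz1) hzm, le_refl α, le_of_lt hrα, ?_⟩
          intro i hi
          rw [hLSe] at hi
          exact absurd hi (Set.notMem_empty i)
        · exact (hSLlow z hzsl i hi) (h.memA i hi.1 hz1)
      · obtain ⟨i, hi, hzc⟩ := Set.mem_iUnion₂.1 hz1
        exact Set.disjoint_left.mp (h.memB i hi.1) hz2 hzc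
      · obtain ⟨i, hi, hzc⟩ := Set.mem_iUnion₂.1 hz1
        obtain ⟨j, hj, hzc2⟩ := Set.mem_iUnion₂.1 hz2
        exact hzc2 (h.nest i hi.1 j hj.1 (lt_trans hi.2 hj.2) hzc)
      · obtain ⟨i, hi, hzc⟩ := Set.mem_iUnion₂.1 hz1
        obtain ⟨hzo, hzsl⟩ := hz2
        obtain ⟨m, hm, hzm⟩ := Set.mem_iUnion₂.1 hzo
        have hζ : ζ z ≠ 0 := hζnz z m hzm hm.1
        rcases h.clean z hζ i hi.1 with h2 | h2
        · exact (hSLlow z hzsl i hi) h2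
        · exact h2 hzc
      · obtain ⟨hzo, hzsl⟩ := hz1
        obtain ⟨m, hm, hzm⟩ := Set.mem_iUnion₂.1 hzo
        rcases Set.eq_empty_or_nonempty HS with hHSe | ⟨i, hi⟩
        · refine hm.2 ⟨β, dvd_trans (hBac z hz2) hzm, hrβ, le_refl β, ?_⟩
          intro i hi
          rw [hHSe] at hi
          exact absurd hi (Set.notMem_empty i)
        · have hζ : ζ z ≠ 0 := hζnz z m hzm hm.1
          exact Set.disjoint_left.mp (h.memB i hi.1) hz2
            (subset_closure (hSLhigh z hzsl hζ i hi))
      · obtain ⟨hzo, hzsl⟩ := hz1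
        obtain ⟨m, hm, hzm⟩ := Set.mem_iUnion₂.1 hzo
        obtain ⟨i, hi, hzc⟩ := Set.mem_iUnion₂.1 hz2
        have hζ : ζ z ≠ 0 := hζnz z m hzm hm.1
        exact hzc (hSLhigh z hzsl hζ i hi)
      · obtain ⟨hzo1, hzsl⟩ := hz1
        obtain ⟨hzo2, _⟩ := hz2
        obtain ⟨m1, hm1, hzm1⟩ := Set.mem_iUnion₂.1 hzo1
        obtain ⟨m2, hm2, hzm2⟩ := Set.mem_iUnion₂.1 hzo2
        have hζ : ζ z ≠ 0 := hζnz z m1 hzm1 hm1.1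
        rcases hSLcand z hzsl hζ with hcand | hcand
        · exact hm2.2 (hCLmono _ _ hzm2 hcand)
        · exact hm1.2 (hCUmono _ _ hzm1 hcand)
    -- apply the separation lemma
    obtain ⟨P, Q, hPo, hQo, hAP, hBQ, hPQ, hz0⟩ := asep hX hAtilCl hBtilCl hdisjT
    have hclP : closure P ⊆ Qᶜ :=
      closure_minimal (fun x hx hxQ => Set.disjoint_left.mp hPQ hx hxQ) hQo.isClosed_compl
    have hQnP : ∀ z, z ∈ Q → z ∉ P := fun z hq hp => Set.disjoint_left.mp hPQ hp hq
    have hPorQ : ∀ z : X, ζ z ≠ 0 → z ∈ P ∨ z ∈ Q := by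
      intro z hζ
      by_contra hc
      push_neg at hc
      refine hζ (hz0 z ?_)
      intro hmem
      rcases hmem with hm | hm
      · exact hc.1 hm
      · exact hc.2 hm
    refine ⟨P, ?_, ?_, ?_, ?_, ?_, ?_⟩
    · intro i hi
      rcases Nat.lt_succ_iff_lt_or_eq.1 hi with hik | rfl
      · simpa [Nat.ne_of_lt hik] using h.opn i hik
      · simpa using hPo
    · intro i hi j hj hij
      rcases Nat.lt_succ_iff_lt_or_eq.1 hi with hik | rfl <;>
        rcases Nat.lt_succ_iff_lt_or_eq.1 hj with hjk | rfl
      · simpa [Nat.ne_of_lt hik, Nat.ne_of_lt hjk] using h.nest i hik j hjk hij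
      · simp only [if_pos rfl, if_neg (Nat.ne_of_lt hik)]
        exact subset_trans (fun x hx => hAP (Or.inl (Or.inr
          (Set.mem_biUnion (⟨hik, hij⟩ : i ∈ LS) hx)))) (le_refl _)
      · simp only [if_pos rfl, if_neg (Nat.ne_of_lt hjk)]
        intro x hx
        by_contra hxj
        exact hclP hx (hBQ (Or.inl (Or.inr (Set.mem_biUnion (⟨hjk, hij⟩ : j ∈ HS) hxj))))
      · exact absurd hij (lt_irrefl _)
    · intro i hi
      rcases Nat.lt_succ_iff_lt_or_eq.1 hi with hik | rfl
      · simpa [Nat.ne_of_lt hik] using h.memA i hik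
      · simp only [if_pos rfl]
        exact fun x hx => hAP (Or.inl (Or.inl hx))
    · intro i hi
      rcases Nat.lt_succ_iff_lt_or_eq.1 hi with hik | rfl
      · simpa [Nat.ne_of_lt hik] using h.memB i hik
      · simp only [if_pos rfl]
        rw [Set.disjoint_left]
        intro x hx hxc
        exact hclP hxc (hBQ (Or.inl (Or.inl hx)))
    · intro z hζ i hi
      rcases Nat.lt_succ_iff_lt_or_eq.1 hi with hik | rfl
      · simpa [Nat.ne_of_lt hik] using h.clean z hζ i hik
      · simp only [if_pos rfl]
        rcases hPorQ z hζ with hzP | hzQ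
        · exact Or.inl hzP
        · exact Or.inr (fun hc => hclP hc hzQ)
    · intro z hζ
      obtain ⟨v, hv1, hv2, hv3, hv4, hv5⟩ := h.kinv z hζ
      have hζpos : 0 < ζ z := Nat.pos_of_ne_zero hζ
      by_cases hzSL : z ∈ SL
      · have hlow : ∀ i ∈ LS, z ∉ V i := fun i hi => hSLlow z hzSL i hi
        have hhigh : ∀ i ∈ HS, z ∈ V i := fun i hi => hSLhigh z hzSL hζ i hi
        rcases hPorQ z hζ with hzP | hzQ
        · -- z goes inside: need a witness ≤ r
          have hcl : CandLow (ζ z) := by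
            by_contra hc
            have hzB : z ∈ Btil :=
              Or.inr ⟨Set.mem_biUnion (⟨hζpos, hc⟩ : ζ z ∈ Mo) (dvd_refl _), hzSL⟩
            exact Set.disjoint_left.mp hPQ hzP (hBQ hzB)
          obtain ⟨w, hw1, hw2, hw3, hw4⟩ := hcl
          refine ⟨w, hw2, le_trans hw3 (le_of_lt hrβ), hw1, ?_, ?_⟩
          · intro i hi hzi
            rcases Nat.lt_succ_iff_lt_or_eq.1 hi with hik | rfl
            · simp only [if_neg (Nat.ne_of_lt hik)] at hzi
              rcases hsplit i hik with hlt | hgt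
              · exact absurd hzi (hlow i ⟨hik, hlt⟩)
              · linarith
            · exact hw3
          · intro i hi hzi
            rcases Nat.lt_succ_iff_lt_or_eq.1 hi with hik | rfl
            · simp only [if_neg (Nat.ne_of_lt hik)] at hzi
              rcases hsplit i hik with hlt | hgt
              · exact hw4 i ⟨hik, hlt⟩
              · exact absurd (hhigh i ⟨hik, hgt⟩) hzi
            · simp only [if_pos rfl] at hzi
              exact absurd hzP hzi
        · -- z goes outside: need a witness > r
          have hznP : z ∉ P := hQnP z hzQ
          have hcu : CandUp (ζ z) := by
            by_contra hc
            have hzA : z ∈ Atil :=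
              Or.inr ⟨Set.mem_biUnion (⟨hζpos, hc⟩ : ζ z ∈ Mi) (dvd_refl _), hzSL⟩
            exact hznP (hAP hzA)
          obtain ⟨w, hw1, hw2, hw3, hw4⟩ := hcu
          refine ⟨w, le_trans (le_of_lt hrα) (le_of_lt hw2), hw3, hw1, ?_, ?_⟩
          · intro i hi hzi
            rcases Nat.lt_succ_iff_lt_or_eq.1 hi with hik | rfl
            · simp only [if_neg (Nat.ne_of_lt hik)] at hzi
              rcases hsplit i hik with hlt | hgt
              · exact absurd hzi (hlow i ⟨hik, hlt⟩)
              · exact hw4 i ⟨hik, hgt⟩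
            · simp only [if_pos rfl] at hzi
              exact absurd hzi hznP
          · intro i hi hzi
            rcases Nat.lt_succ_iff_lt_or_eq.1 hi with hik | rfl
            · simp only [if_neg (Nat.ne_of_lt hik)] at hzi
              rcases hsplit i hik with hlt | hgt
              · linarith
              · exact absurd (hhigh i ⟨hik, hgt⟩) hzi
            · exact hw2
      · rcases hnSL z hzSL with ⟨i0, hi0, hzi0⟩ | ⟨i0, hi0, hzi0⟩
        · -- below the slab : z stays inside P
          have hzP : z ∈ P := hAP (Or.inl (Or.inr
            (Set.mem_biUnion hi0 (subset_closure hzi0))))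
          have hvr : v ≤ e i0 := hv4 i0 hi0.1 hzi0
          refine ⟨v, hv1, hv2, hv3, ?_, ?_⟩
          · intro i hi hzi
            rcases Nat.lt_succ_iff_lt_or_eq.1 hi with hik | rfl
            · simp only [if_neg (Nat.ne_of_lt hik)] at hzi
              exact hv4 i hik hzi
            · exact le_trans hvr (le_of_lt hi0.2)
          · intro i hi hzi
            rcases Nat.lt_succ_iff_lt_or_eq.1 hi with hik | rfl
            · simp only [if_neg (Nat.ne_of_lt hik)] at hzi
              exact hv5 i hik hzi
            · simp only [if_pos rfl] at hzi
              exact absurd hzP hzi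
        · -- above the slab : z stays outside
          have hznVi0 : z ∉ V i0 := fun hzi => hzi0 (subset_closure hzi)
          have hzQ : z ∈ Q := hBQ (Or.inl (Or.inr (Set.mem_biUnion hi0 hznVi0)))
          have hznP : z ∉ P := hQnP z hzQ
          have hvr : e i0 < v := hv5 i0 hi0.1 hznVi0
          refine ⟨v, hv1, hv2, hv3, ?_, ?_⟩
          · intro i hi hzi
            rcases Nat.lt_succ_iff_lt_or_eq.1 hi with hik | rfl
            · simp only [if_neg (Nat.ne_of_lt hik)] at hzi
              exact hv4 i hik hzi
            · simp only [if_pos rfl] at hzi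
              exact absurd hzi hznP
          · intro i hi hzi
            rcases Nat.lt_succ_iff_lt_or_eq.1 hi with hik | rfl
            · simp only [if_neg (Nat.ne_of_lt hik)] at hzi
              exact hv5 i hik hzi
            · exact lt_trans hi0.2 hvr

end Step

section Glue
variable {X : Type*} [TopologicalSpace X] {ζ : X → ℕ} {A B : Set X} {α β : ℝ} {e : ℕ → ℝ}

lemma ainv_congr {k : ℕ} {V W : ℕ → Set X} (hVW : ∀ i < k, V i = W i)
    (h : AInv ζ A B α β e k V) : AInv ζ A B α β e k W := by
  constructor
  · intro i hi; rw [← hVW i hi]; exact h.opn i hi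
  · intro i hi j hj hij; rw [← hVW i hi, ← hVW j hj]; exact h.nest i hi j hj hij
  · intro i hi; rw [← hVW i hi]; exact h.memA i hi
  · intro i hi; rw [← hVW i hi]; exact h.memB i hi
  · intro z hζ i hi; rw [← hVW i hi]; exact h.clean z hζ i hi
  · intro z hζ
    obtain ⟨v, h1, h2, h3, h4, h5⟩ := h.kinv z hζ
    refine ⟨v, h1, h2, h3, ?_, ?_⟩
    · intro i hi hz; exact h4 i hi (by rw [hVW i hi]; exact hz)
    · intro i hi hz; exact h5 i hi (fun hz2 => hz (by rw [← hVW i hi]; exact hz2))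

lemma afamily (hX : ANormal ζ) (hA : IsClosed A) (hB : IsClosed B) (hAB : Disjoint A B)
    (hab : α < β)
    (hXac' : ∀ z : X, ∃ v : ℝ, α ≤ v ∧ v ≤ β ∧ den v ∣ ζ z)
    (hAac : ∀ z ∈ A, den α ∣ ζ z) (hBac : ∀ z ∈ B, den β ∣ ζ z)
    (he1 : ∀ n, α < e n ∧ e n < β) :
    ∃ V : ℕ → Set X, ∀ k, AInv ζ A B α β e k V := by
  have h0 : AInv ζ A B α β e 0 (fun _ => (∅ : Set X)) := by
    refine ⟨?_, ?_, ?_, ?_, ?_, ?_⟩ <;>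
      first
        | (intro i hi; exact absurd hi (Nat.not_lt_zero i))
        | (intro z hζ i hi; exact absurd hi (Nat.not_lt_zero i))
        | (intro z hζ
           obtain ⟨v, h1, h2, h3⟩ := hXac' z
           exact ⟨v, h1, h2, h3, fun i hi => absurd hi (Nat.not_lt_zero i),
             fun i hi => absurd hi (Nat.not_lt_zero i)⟩)
  let g : ∀ k : ℕ, {W : ℕ → Set X // AInv ζ A B α β e k W} := fun k =>
    Nat.rec ⟨fun _ => (∅ : Set X), h0⟩
      (fun n ih =>
        ⟨fun i => if i = n
            then (astep hX hA hB hAB hab hAac hBac he1 n ih.1 ih.2).choose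
            else ih.1 i,
         (astep hX hA hB hAB hab hAac hBac he1 n ih.1 ih.2).choose_spec⟩) k
  have hg : ∀ k i : ℕ, (g (k+1)).1 i = if i = k
      then (astep hX hA hB hAB hab hAac hBac he1 k (g k).1 (g k).2).choose
      else (g k).1 i := fun k i => rfl
  refine ⟨fun i => (g (i+1)).1 i, ?_⟩
  have hcoh : ∀ k i, i < k → (g k).1 i = (g (i+1)).1 i := by
    intro k
    induction k with
    | zero => intro i hi; exact absurd hi (Nat.not_lt_zero i)
    | succ n ih =>
      intro i hi
      rcases Nat.lt_succ_iff_lt_or_eq.1 hi with hik | rfl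
      · rw [hg n i, if_neg (Nat.ne_of_lt hik)]
        exact ih i hik
      · rfl
  exact fun k => ainv_congr (fun i hi => hcoh k i hi) (g k).2

end Glue


/-- **Urysohn's lemma for a-spaces.** If `A`, `B` are disjoint closed
subsets of an a-normal space `X` with `X ⊆ AC [α,β]`, `A ⊆ AC {α}`, `B ⊆ AC {β}`, then
there is an a-map `f : X → [α,β]` with `f ≡ α` on `A` and `f ≡ β` on `B`. -/
theorem urysohn_for_aspaces
    {X : Type*} [TopologicalSpace X] (ζ : X → ℕ) (hX : ANormal ζ)
    (A B : Set X) (hA : IsClosed A) (hB : IsClosed B) (hAB : Disjoint A B)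
    (α β : ℝ) (hαβ : α ≤ β)
    (hXac : ∀ x : X, x ∈ AC ζ (Set.Icc α β))
    (hAac : A ⊆ AC ζ {α}) (hBac : B ⊆ AC ζ {β}) :
    ∃ f : X → ℝ, Continuous f ∧ (∀ x, f x ∈ Set.Icc α β) ∧
      (∀ x, den (f x) ∣ ζ x) ∧ (∀ x ∈ A, f x = α) ∧ (∀ x ∈ B, f x = β) := by
  rcases eq_or_lt_of_le hαβ with heq | hlt
  · subst heq
    refine ⟨fun _ => α, continuous_const, fun x => ⟨le_refl α, le_refl α⟩, ?_,
      fun x _ => rfl, fun x _ => rfl⟩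
    intro x
    obtain ⟨l, hl, hdvd⟩ := hXac x
    rw [Set.mem_Icc] at hl
    have hlα : l = α := le_antisymm hl.2 hl.1
    rw [← hlα]
    exact hdvd
  · obtain ⟨q0, hq01, hq02⟩ := exists_rat_btwn hlt
    set u : ℕ → ℚ := fun n => (Denumerable.eqv ℚ).symm n with hu
    set e : ℕ → ℝ := fun n =>
      if α < ((u n : ℚ) : ℝ) ∧ ((u n : ℚ) : ℝ) < β then ((u n : ℚ) : ℝ) else ((q0 : ℚ) : ℝ)
      with he
    have he1 : ∀ n, α < e n ∧ e n < β := by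
      intro n
      by_cases hc : α < ((u n : ℚ) : ℝ) ∧ ((u n : ℚ) : ℝ) < β
      · rw [he]; simp only [if_pos hc]; exact hc
      · rw [he]; simp only [if_neg hc]; exact ⟨hq01, hq02⟩
    have he3 : ∀ t : ℚ, α < (t : ℝ) → (t : ℝ) < β → ∃ n, e n = (t : ℝ) := by
      intro t h1 h2
      obtain ⟨n, hn⟩ := (Denumerable.eqv ℚ).symm.surjective t
      refine ⟨n, ?_⟩
      rw [he]
      simp only [hu]
      rw [hn, if_pos ⟨h1, h2⟩]
    obtain ⟨V, hinv⟩ := afamily hX hA hB hAB hlt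
      (fun z => by
        obtain ⟨l, hl, hd⟩ := hXac z
        exact ⟨l, (Set.mem_Icc.1 hl).1, (Set.mem_Icc.1 hl).2, hd⟩)
      (fun z hz => by
        obtain ⟨l, hl, hd⟩ := hAac hz
        rw [Set.mem_singleton_iff] at hl
        rw [← hl]; exact hd)
      (fun z hz => by
        obtain ⟨l, hl, hd⟩ := hBac hz
        rw [Set.mem_singleton_iff] at hl
        rw [← hl]; exact hd)
      he1
    set S : X → Set ℝ := fun x => insert β {w : ℝ | ∃ i, x ∈ V i ∧ e i = w} with hS
    have hSne : ∀ x, (S x).Nonempty := fun x => ⟨β, Set.mem_insert _ _⟩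
    have hSlb : ∀ x, ∀ s ∈ S x, α ≤ s := by
      intro x s hs
      rcases hs with rfl | ⟨i, _, rfl⟩
      · exact le_of_lt hlt
      · exact le_of_lt (he1 i).1
    have hbdd : ∀ x, BddBelow (S x) := fun x => ⟨α, fun s hs => hSlb x s hs⟩
    set f : X → ℝ := fun x => sInf (S x) with hf
    have hfle : ∀ x, f x ≤ β := fun x => csInf_le (hbdd x) (Set.mem_insert _ _)
    have hfge : ∀ x, α ≤ f x := fun x => le_csInf (hSne x) (hSlb x)
    have hfleE : ∀ x i, x ∈ V i → f x ≤ e i := fun x i hxi =>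
      csInf_le (hbdd x) (Set.mem_insert_of_mem _ ⟨i, hxi, rfl⟩)
    have hfA : ∀ x ∈ A, f x = α := by
      intro x hx
      refine le_antisymm ?_ (hfge x)
      by_contra hcon
      push_neg at hcon
      obtain ⟨t, ht1, ht2⟩ := exists_rat_btwn (lt_min hcon hlt)
      obtain ⟨i, hi⟩ := he3 t ht1 (lt_of_lt_of_le ht2 (min_le_right _ _))
      have hxi : x ∈ V i := (hinv (i+1)).memA i (Nat.lt_succ_self i) hx
      have h9 := hfleE x i hxi
      rw [hi] at h9
      have h2 : (t : ℝ) < f x := lt_of_lt_of_le ht2 (min_le_left _ _)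
      linarith
    have hfB : ∀ x ∈ B, f x = β := by
      intro x hx
      have hsx : S x = {β} := by
        apply Set.eq_singleton_iff_unique_mem.2
        refine ⟨Set.mem_insert _ _, ?_⟩
        intro s hs
        rcases hs with rfl | ⟨i, hxi, rfl⟩
        · rfl
        · exact absurd (subset_closure hxi)
            (Set.disjoint_left.mp ((hinv (i+1)).memB i (Nat.lt_succ_self i)) hx)
      show sInf (S x) = β
      rw [hsx]
      exact csInf_singleton β
    have hden : ∀ x, den (f x) ∣ ζ x := by
      intro x
      by_cases hζ : ζ x = 0
      · rw [hζ]; exact dvd_zero _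
      · have hζpos : 0 < ζ x := Nat.pos_of_ne_zero hζ
        set d := ζ x with hd
        set D : Set ℝ := {v | α ≤ v ∧ v ≤ β ∧ den v ∣ d} with hD
        have hd0 : (0:ℝ) < (d:ℝ) := by exact_mod_cast hζpos
        have hDfin : D.Finite := by
          refine Set.Finite.subset
            ((Set.finite_Icc (⌈α * (d:ℝ)⌉) (⌊β * (d:ℝ)⌋)).image (fun j : ℤ => (j : ℝ)/(d:ℝ))) ?_
          rintro v ⟨hv1, hv2, hv3⟩
          obtain ⟨j, hj⟩ := (den_dvd_iff hζpos).1 hv3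
          have hjd : (j : ℝ) = v * d := by rw [hj]; field_simp
          refine ⟨j, ⟨?_, ?_⟩, hj.symm⟩
          · rw [Int.ceil_le, hjd]
            exact mul_le_mul_of_nonneg_right hv1 (le_of_lt hd0)
          · rw [Int.le_floor, hjd]
            exact mul_le_mul_of_nonneg_right hv2 (le_of_lt hd0)
        have hw : ∀ k : ℕ, ∃ v : ℝ, v ∈ D ∧
            (∀ i < k, x ∈ V i → v ≤ e i) ∧ (∀ i < k, x ∉ V i → e i < v) := by
          intro k
          obtain ⟨v, h1, h2, h3, h4, h5⟩ := (hinv k).kinv x hζ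
          exact ⟨v, ⟨h1, h2, h3⟩, h4, h5⟩
        choose w hwD hw1 hw2 using hw
        haveI : Finite ↥D := hDfin.to_subtype
        obtain ⟨y, hy⟩ := Finite.exists_infinite_fiber (fun k => (⟨w k, hwD k⟩ : D))
        have hfib : {k : ℕ | w k = (y : ℝ)}.Infinite := by
          have h0 : ((fun k => (⟨w k, hwD k⟩ : D)) ⁻¹' {y}).Infinite := Set.infinite_coe_iff.1 hy
          refine h0.mono ?_
          intro k hk
          rw [Set.mem_preimage, Set.mem_singleton_iff] at hk
          exact congrArg Subtype.val hk
        have hvall1 : ∀ i, x ∈ V i → (y : ℝ) ≤ e i := by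
          intro i hxi
          obtain ⟨k, hk, hik⟩ := hfib.exists_gt i
          rw [← hk]
          exact hw1 k i hik hxi
        have hvall2 : ∀ i, x ∉ V i → e i < (y : ℝ) := by
          intro i hxi
          obtain ⟨k, hk, hik⟩ := hfib.exists_gt i
          rw [← hk]
          exact hw2 k i hik hxi
        have hyD : (y : ℝ) ∈ D := y.2
        have hfxv : f x = (y : ℝ) := by
          refine le_antisymm ?_ ?_
          · rcases eq_or_lt_of_le hyD.2.1 with hyβ | hyβ
            · rw [hyβ]; exact hfle x
            · by_contra hcon
              push_neg at hcon
              obtain ⟨t, ht1, ht2⟩ := exists_rat_btwn (lt_min hcon hyβ)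
              have htfx : (t:ℝ) < f x := lt_of_lt_of_le ht2 (min_le_left _ _)
              have htβ : (t:ℝ) < β := lt_of_lt_of_le ht2 (min_le_right _ _)
              have htα : α < (t:ℝ) := lt_of_le_of_lt hyD.1 ht1
              obtain ⟨i, hi⟩ := he3 t htα htβ
              by_cases hxi : x ∈ V i
              · have := hfleE x i hxi
                rw [hi] at this
                linarith
              · have := hvall2 i hxi
                rw [hi] at this
                linarith
          · refine le_csInf (hSne x) ?_
            intro s hs
            rcases hs with rfl | ⟨i, hxi, rfl⟩
            · exact hyD.2.1
            · exact hvall1 i hxi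
        rw [hfxv]
        exact hyD.2.2
    have hlower : ∀ c : ℝ, IsOpen {x | f x < c} := by
      intro c
      have hset : {x | f x < c} = (⋃ i, ⋃ (_ : e i < c), V i) ∪ (⋃ (_ : β < c), Set.univ) := by
        apply Set.eq_of_subset_of_subset
        · intro x hx
          obtain ⟨s, hs, hsc⟩ := exists_lt_of_csInf_lt (hSne x) hx
          rcases hs with rfl | ⟨i, hxi, rfl⟩
          · exact Or.inr (Set.mem_iUnion.2 ⟨hsc, Set.mem_univ x⟩)
          · exact Or.inl (Set.mem_iUnion.2 ⟨i, Set.mem_iUnion.2 ⟨hsc, hxi⟩⟩)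
        · intro x hx
          rcases hx with hx | hx
          · obtain ⟨i, hx2⟩ := Set.mem_iUnion.1 hx
            obtain ⟨hic, hxi⟩ := Set.mem_iUnion.1 hx2
            exact lt_of_le_of_lt (hfleE x i hxi) hic
          · obtain ⟨hc, _⟩ := Set.mem_iUnion.1 hx
            exact lt_of_le_of_lt (hfle x) hc
      rw [hset]
      exact (isOpen_iUnion (fun i => isOpen_iUnion
          (fun _ => (hinv (i+1)).opn i (Nat.lt_succ_self i)))).union
        (isOpen_iUnion (fun _ => isOpen_univ))
    have hupper : ∀ c : ℝ, IsOpen {x | c < f x} := by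
      intro c
      have hset : {x | c < f x} =
          (⋃ i, ⋃ (_ : c < e i), (closure (V i))ᶜ) ∪ (⋃ (_ : c < α), Set.univ) := by
        apply Set.eq_of_subset_of_subset
        · intro x hx
          rcases lt_or_ge c α with hcα | hcα
          · exact Or.inr (Set.mem_iUnion.2 ⟨hcα, Set.mem_univ x⟩)
          · have hx' : c < f x := hx
            obtain ⟨t, ht1, ht2⟩ := exists_rat_btwn hx'
            obtain ⟨t', ht1', ht2'⟩ := exists_rat_btwn ht2
            have htt' : (t:ℝ) < (t':ℝ) := by exact_mod_cast ht1'
            have htα : α < (t:ℝ) := lt_of_le_of_lt hcα ht1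
            have ht'β : (t':ℝ) < β := lt_of_lt_of_le ht2' (hfle x)
            have htβ : (t:ℝ) < β := lt_trans htt' ht'β
            have ht'α : α < (t':ℝ) := lt_trans htα htt'
            obtain ⟨i, hi⟩ := he3 t htα htβ
            obtain ⟨j, hj⟩ := he3 t' ht'α ht'β
            have hxj : x ∉ V j := by
              intro hxj
              have h9 := hfleE x j hxj
              rw [hj] at h9
              linarith
            have hnij : closure (V i) ⊆ V j := by
              refine (hinv (max i j + 1)).nest i ?_ j ?_ ?_
              · exact Nat.lt_succ_of_le (le_max_left _ _)
              · exact Nat.lt_succ_of_le (le_max_right _ _)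
              · rw [hi, hj]; exact htt'
            refine Or.inl (Set.mem_iUnion.2 ⟨i, Set.mem_iUnion.2
              ⟨by rw [hi]; exact ht1, fun hcl => hxj (hnij hcl)⟩⟩)
        · intro x hx
          rcases hx with hx | hx
          · obtain ⟨i, hx2⟩ := Set.mem_iUnion.1 hx
            obtain ⟨hic, hxi⟩ := Set.mem_iUnion.1 hx2
            have hlb : ∀ s ∈ S x, min (e i) β ≤ s := by
              intro s hs
              rcases hs with rfl | ⟨j, hxj, rfl⟩
              · exact min_le_right _ _
              · refine le_trans (min_le_left _ _) ?_
                by_contra hlt2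
                push_neg at hlt2
                have hnji : closure (V j) ⊆ V i := by
                  refine (hinv (max i j + 1)).nest j ?_ i ?_ hlt2
                  · exact Nat.lt_succ_of_le (le_max_right _ _)
                  · exact Nat.lt_succ_of_le (le_max_left _ _)
                exact hxi (subset_closure (hnji (subset_closure hxj)))
            have hlbf : min (e i) β ≤ f x := le_csInf (hSne x) hlb
            exact lt_of_lt_of_le (lt_min hic (lt_trans hic (he1 i).2)) hlbf
          · obtain ⟨hc, _⟩ := Set.mem_iUnion.1 hx
            exact lt_of_lt_of_le hc (hfge x)
      rw [hset]
      exact (isOpen_iUnion (fun i => isOpen_iUnion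
          (fun _ => (isClosed_closure (s := V i)).isOpen_compl))).union
        (isOpen_iUnion (fun _ => isOpen_univ))
    have hcont : Continuous f := by
      rw [continuous_iff_coinduced_le, OrderTopology.topology_eq_generate_intervals (α := ℝ),
        Preorder.topology, TopologicalSpace.le_generateFrom_iff_subset_isOpen]
      rintro s ⟨a, rfl | rfl⟩
      · rw [Set.mem_setOf_eq, isOpen_coinduced]
        exact hupper a
      · rw [Set.mem_setOf_eq, isOpen_coinduced]
        exact hlower a
    exact ⟨f, hcont, fun x => ⟨hfge x, hfle x⟩, hden, hfA, hfB⟩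
end

section
/- Let X be an a-normal space with denominator function ζ and let x ∈ X. Then there exists a continuous function f : X → [0,1] with den(f(z)) dividing ζ(z) for all z ∈ X, such that den(f(x)) = ζ(x). -/
section AuxAspace

-- fraction with denominator dividing m in a rational interval of length ≥ 1/m
lemma exists_frac_in_interval {r s : ℚ} {m : ℕ} (hm : m ≠ 0) (h : 1 ≤ (s - r) * m) :
    ∃ q : ℚ, q.den ∣ m ∧ r ≤ q ∧ q ≤ s := by
  refine ⟨(⌈r * m⌉ : ℚ) / (m : ℚ), ?_, ?_, ?_⟩
  · have : ((⌈r * m⌉ : ℚ) / (m : ℚ)) = Rat.divInt (⌈r * m⌉ : ℤ) (m : ℤ) := by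
      rw [Rat.divInt_eq_div]; push_cast; ring
    rw [this]
    have := Rat.den_dvd (⌈r * m⌉ : ℤ) (m : ℤ)
    exact_mod_cast Int.ofNat_dvd.mp (by exact_mod_cast this)
  · rw [le_div_iff₀ (by exact_mod_cast Nat.pos_of_ne_zero hm)]
    exact_mod_cast Int.le_ceil (r * m)
  · rw [div_le_iff₀ (by exact_mod_cast Nat.pos_of_ne_zero hm)]
    have h1 : (⌈r * m⌉ : ℚ) < r * m + 1 := by exact_mod_cast Int.ceil_lt_add_one (r * m)
    nlinarith


variable {X : Type*} [TopologicalSpace X]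

def BadSet (ζ : X → ℕ) (r s : ℚ) : Set X :=
  {z | ζ z ≠ 0 ∧ ∀ q : ℚ, q.den ∣ ζ z → ¬(r ≤ q ∧ q ≤ s)}

lemma badSet_closed {ζ : X → ℕ} (hN2 : ∀ n : ℕ, IsClosed {x : X | ζ x ∣ n})
    {r s : ℚ} (hrs : r < s) : IsClosed (BadSet ζ r s) := by
  classical
  set K : ℕ := ⌈(s - r)⁻¹⌉₊ with hK
  have hsr : 0 < s - r := by linarith
  have hbound : ∀ m : ℕ, m ≠ 0 → (∀ q : ℚ, q.den ∣ m → ¬(r ≤ q ∧ q ≤ s)) → m ≤ K := by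
    intro m hm hP
    by_contra hmK
    push_neg at hmK
    have h1 : 1 ≤ (s - r) * m := by
      rw [← inv_le_iff_one_le_mul₀' hsr]
      calc (s - r)⁻¹ ≤ (K : ℚ) := by exact_mod_cast Nat.le_ceil _
        _ ≤ (m : ℚ) := by exact_mod_cast hmK.le
    obtain ⟨q, h2, h3, h4⟩ := exists_frac_in_interval hm h1
    exact hP q h2 ⟨h3, h4⟩
  have heq : BadSet ζ r s = ⋃ m ∈ {m : ℕ | m ≤ K ∧ m ≠ 0 ∧
      ∀ q : ℚ, q.den ∣ m → ¬(r ≤ q ∧ q ≤ s)}, {z | ζ z ∣ m} := by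
    ext z
    simp only [Set.mem_iUnion, Set.mem_setOf_eq, exists_prop]
    constructor
    · rintro ⟨h1, h2⟩
      exact ⟨ζ z, ⟨hbound _ h1 h2, h1, h2⟩, dvd_refl _⟩
    · rintro ⟨m, ⟨hmK, hm0, hP⟩, hdvd⟩
      refine ⟨fun h0 => hm0 (by rwa [h0, zero_dvd_iff] at hdvd), ?_⟩
      intro q hq
      exact hP q (hq.trans hdvd)
  rw [heq]
  refine Set.Finite.isClosed_biUnion ?_ (fun m _ => hN2 m)
  exact (Set.finite_Iic K).subset (fun m hm => hm.1)

lemma sep_pt (hX : ANormal ζ) {x : X} {F : Set X} (hF : IsClosed F) (hx : x ∉ F) :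
    ∃ U V : Set X, IsOpen U ∧ IsOpen V ∧ x ∈ U ∧ F ⊆ V ∧ Disjoint U V ∧
      ∀ z ∈ (U ∪ V)ᶜ, ζ z = 0 := by
  obtain ⟨hcomp, ht2, hN2, hN3⟩ := hX
  have hsep : ∀ y ∈ F, ∃ UV : Set X × Set X, IsOpen UV.1 ∧ IsOpen UV.2 ∧ x ∈ UV.1 ∧
      y ∈ UV.2 ∧ Disjoint UV.1 UV.2 ∧ ∀ z ∈ (UV.1 ∪ UV.2)ᶜ, ζ z = 0 := by
    intro y hy
    obtain ⟨U, V, h1, h2, h3, h4, h5, h6⟩ := hN3 x y (fun h => hx (h ▸ hy))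
    exact ⟨(U, V), h1, h2, h3, h4, h5, h6⟩
  choose! UV hU hV hxU hyV hdisj hzero using hsep
  have hFc : IsCompact F := hF.isCompact
  have hcover : F ⊆ ⋃ y ∈ F, (UV y).2 := fun y hy => Set.mem_biUnion hy (hyV y hy)
  obtain ⟨t, htF, htfin, hts⟩ := hFc.elim_finite_subcover_image (fun y hy => hV y hy) hcover
  refine ⟨⋂ y ∈ t, (UV y).1, ⋃ y ∈ t, (UV y).2, ?_, ?_, ?_, hts, ?_, ?_⟩
  · exact htfin.isOpen_biInter (fun y hy => hU y (htF hy))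
  · exact isOpen_biUnion (fun y hy => hV y (htF hy))
  · exact Set.mem_biInter (fun y hy => hxU y (htF hy))
  · rw [Set.disjoint_left]
    rintro z hz1 hz2
    obtain ⟨y, hy, hzy⟩ := Set.mem_iUnion₂.mp hz2
    exact Set.disjoint_left.mp (hdisj y (htF hy)) (Set.mem_iInter₂.mp hz1 y hy) hzy
  · intro z hz
    rw [Set.mem_compl_iff, Set.mem_union, not_or] at hz
    obtain ⟨hz1, hz2⟩ := hz
    by_cases ht : t.Nonempty
    · obtain ⟨y, hy, hzy⟩ : ∃ y ∈ t, z ∉ (UV y).1 := by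
        by_contra h
        push_neg at h
        exact hz1 (Set.mem_biInter h)
      refine hzero y (htF hy) z ?_
      rw [Set.mem_compl_iff, Set.mem_union, not_or]
      exact ⟨hzy, fun h => hz2 (Set.mem_biUnion hy h)⟩
    ·
      exact absurd (by simp [Set.not_nonempty_iff_eq_empty.mp ht]) hz1

lemma sep_cl (hX : ANormal ζ) {A B : Set X} (hA : IsClosed A) (hB : IsClosed B)
    (hAB : Disjoint A B) :
    ∃ U V : Set X, IsOpen U ∧ IsOpen V ∧ A ⊆ U ∧ B ⊆ V ∧ Disjoint U V ∧
      ∀ z ∈ (U ∪ V)ᶜ, ζ z = 0 := by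
  have hcs : CompactSpace X := hX.1
  have hsep : ∀ y ∈ A, ∃ UV : Set X × Set X, IsOpen UV.1 ∧ IsOpen UV.2 ∧ y ∈ UV.1 ∧
      B ⊆ UV.2 ∧ Disjoint UV.1 UV.2 ∧ ∀ z ∈ (UV.1 ∪ UV.2)ᶜ, ζ z = 0 := by
    intro y hy
    obtain ⟨U, V, h1, h2, h3, h4, h5, h6⟩ := sep_pt hX hB (Set.disjoint_left.mp hAB hy)
    exact ⟨(U, V), h1, h2, h3, h4, h5, h6⟩
  choose! UV hU hV hxU hyV hdisj hzero using hsep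
  have hAc : IsCompact A := hA.isCompact
  have hcover : A ⊆ ⋃ y ∈ A, (UV y).1 := fun y hy => Set.mem_biUnion hy (hxU y hy)
  obtain ⟨t, htA, htfin, hts⟩ := hAc.elim_finite_subcover_image (fun y hy => hU y hy) hcover
  refine ⟨⋃ y ∈ t, (UV y).1, ⋂ y ∈ t, (UV y).2, ?_, ?_, hts, ?_, ?_, ?_⟩
  · exact isOpen_biUnion (fun y hy => hU y (htA hy))
  · exact htfin.isOpen_biInter (fun y hy => hV y (htA hy))
  · exact fun b hb => Set.mem_biInter (fun y hy => hyV y (htA hy) hb)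
  · rw [Set.disjoint_left]
    rintro z hz1 hz2
    obtain ⟨y, hy, hzy⟩ := Set.mem_iUnion₂.mp hz1
    exact Set.disjoint_left.mp (hdisj y (htA hy)) hzy (Set.mem_iInter₂.mp hz2 y hy)
  · intro z hz
    rw [Set.mem_compl_iff, Set.mem_union, not_or] at hz
    obtain ⟨hz1, hz2⟩ := hz
    by_cases ht : t.Nonempty
    · obtain ⟨y, hy, hzy⟩ : ∃ y ∈ t, z ∉ (UV y).2 := by
        by_contra h
        push_neg at h
        exact hz2 (Set.mem_biInter h)
      refine hzero y (htA hy) z ?_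
      rw [Set.mem_compl_iff, Set.mem_union, not_or]
      exact ⟨fun h => hz1 (Set.mem_biUnion hy h), hzy⟩
    · exact absurd (by simp [Set.not_nonempty_iff_eq_empty.mp ht]) hz2

structure AState (ζ : X → ℕ) (x : X) (v : ℝ) where
  S : Finset ℚ
  U : ℚ → Set X
  mem0 : (0:ℚ) ∈ S
  mem1 : (1:ℚ) ∈ S
  hrange : ∀ q ∈ S, 0 ≤ q ∧ q ≤ 1
  hopen : ∀ q ∈ S, IsOpen (U q)
  hI1 : ∀ r ∈ S, ∀ s ∈ S, r < s → closure (U r) ⊆ U s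
  hI2 : ∀ r ∈ S, ∀ z ∈ closure (U r), z ∉ U r → ζ z = 0
  hI3 : ∀ r ∈ S, ∀ s ∈ S, r < s → ∀ z ∈ closure (U s), z ∉ U r → ζ z ≠ 0 →
        ∃ q : ℚ, q.den ∣ ζ z ∧ r ≤ q ∧ q ≤ s
  hI4a : ∀ r ∈ S, (r:ℝ) ≤ v → x ∉ closure (U r)
  hI4b : ∀ r ∈ S, v < (r:ℝ) → x ∈ U r

variable {ζ : X → ℕ} {x : X} {v : ℝ}

noncomputable def initState (hv0 : 0 < v) (hv1 : v < 1) : AState ζ x v where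
  S := {0, 1}
  U := fun q => if q = 1 then Set.univ else ∅
  mem0 := by simp
  mem1 := by simp
  hrange := by intro q hq; rcases Finset.mem_insert.mp hq with h | h <;> simp_all
  hopen := by
    intro q _
    by_cases h : q = 1 <;> simp [h, isOpen_univ, isOpen_empty]
  hI1 := by
    intro r hr s hs hrs
    rcases Finset.mem_insert.mp hr with h | h <;>
      rcases Finset.mem_insert.mp hs with h' | h' <;>
      (try simp only [Finset.mem_singleton] at *) <;> subst h <;> subst h'
    · exact absurd hrs (lt_irrefl _)
    · simp
    · norm_num at hrs
    · exact absurd hrs (lt_irrefl _)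
  hI2 := by
    intro r hr z hz hz'
    by_cases h : r = 1 <;> simp [h] at hz hz' <;> tauto
  hI3 := by
    intro r hr s hs hrs z _ hzr hζ
    have h0 : r = 0 ∧ s = 1 := by
      rcases Finset.mem_insert.mp hr with h | h <;>
        rcases Finset.mem_insert.mp hs with h' | h' <;>
        (try simp only [Finset.mem_singleton] at *) <;> subst h <;> subst h' <;>
        first
          | exact absurd hrs (lt_irrefl _)
          | exact ⟨rfl, rfl⟩
          | norm_num at hrs
    exact ⟨0, one_dvd _, by rw [h0.1], by rw [h0.2]; norm_num⟩
  hI4a := by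
    intro r hr hrv
    have hr1 : r ≠ 1 := by
      rintro rfl
      push_cast at hrv
      linarith
    simp [hr1]
  hI4b := by
    intro r hr hvr
    have hr1 : r = 1 := by
      rcases Finset.mem_insert.mp hr with h | h
      · subst h; push_cast at hvr; linarith
      · simpa using h
    simp [hr1]

lemma not_badSet {ζ : X → ℕ} {r s : ℚ} {z : X} (hζ : ζ z ≠ 0) (h : z ∉ BadSet ζ r s) :
    ∃ q : ℚ, q.den ∣ ζ z ∧ r ≤ q ∧ q ≤ s := by
  classical
  by_contra hc
  push_neg at hc
  exact h ⟨hζ, fun q hd hand => absurd hand.2 (not_le.mpr (hc q hd hand.1))⟩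

lemma step_ex (hX : ANormal ζ)
    (hvF : ζ x ≠ 0 → ∃ qv : ℚ, (qv : ℝ) = v ∧ qv.den ∣ ζ x)
    (st : AState ζ x v) (t : ℚ) (ht0 : 0 < t) (ht1 : t < 1) (htS : t ∉ st.S) :
    ∃ st' : AState ζ x v, st.S ⊆ st'.S ∧ (∀ q ∈ st.S, st'.U q = st.U q) ∧ t ∈ st'.S := by
  haveI : CompactSpace X := hX.1
  haveI : T2Space X := hX.2.1
  have hN2 := hX.2.2.1
  -- neighbors
  obtain ⟨r, hrmem', hrmax'⟩ := Finset.exists_max_image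
    (st.S.filter (fun q => q < t)) id ⟨0, Finset.mem_filter.mpr ⟨st.mem0, ht0⟩⟩
  obtain ⟨s, hsmem', hsmin'⟩ := Finset.exists_min_image
    (st.S.filter (fun q => t < q)) id ⟨1, Finset.mem_filter.mpr ⟨st.mem1, ht1⟩⟩
  rw [Finset.mem_filter] at hrmem' hsmem'
  obtain ⟨hrS, hrt⟩ := hrmem'
  obtain ⟨hsS, hts⟩ := hsmem'
  have hrs : r < s := hrt.trans hts
  have hrmax : ∀ a ∈ st.S, a < t → a ≤ r := fun a ha hat =>
    hrmax' a (Finset.mem_filter.mpr ⟨ha, hat⟩)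
  have hsmin : ∀ a ∈ st.S, t < a → s ≤ a := fun a ha hat =>
    hsmin' a (Finset.mem_filter.mpr ⟨ha, hat⟩)
  -- the two closed sets
  set A : Set X := closure (st.U r) ∪ (BadSet ζ t s ∩ closure (st.U s)) ∪
    {y | y = x ∧ v < (t:ℝ)} with hAdef
  set B : Set X := (st.U s)ᶜ ∪ (BadSet ζ r t ∩ (st.U r)ᶜ) ∪
    {y | y = x ∧ (t:ℝ) ≤ v} with hBdef
  have hsingleton : ∀ P : Prop, IsClosed {y : X | y = x ∧ P} := by
    intro P
    by_cases hP : P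
    · have : {y : X | y = x ∧ P} = {x} := by ext y; simp [hP]
      rw [this]; exact isClosed_singleton
    · have : {y : X | y = x ∧ P} = ∅ := by ext y; simp [hP]
      rw [this]; exact isClosed_empty
  have hAclosed : IsClosed A :=
    (((isClosed_closure).union ((badSet_closed hN2 hts).inter isClosed_closure))).union
      (hsingleton _)
  have hBclosed : IsClosed B :=
    (((st.hopen s hsS).isClosed_compl).union
      ((badSet_closed hN2 hrt).inter (st.hopen r hrS).isClosed_compl)).union (hsingleton _)
  have hI1rs := st.hI1 r hrS s hsS hrs
  have hdisj : Disjoint A B := by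
    rw [Set.disjoint_left]
    rintro z ((hA1 | hA2) | hA3) ((hB1 | hB2) | hB3)
    · exact hB1 (hI1rs hA1)
    · exact hB2.1.1 (st.hI2 r hrS z hA1 hB2.2)
    · rw [Set.mem_setOf_eq] at hB3
      obtain ⟨rfl, htv⟩ := hB3
      exact st.hI4a r hrS (le_trans (le_of_lt (by exact_mod_cast hrt)) htv) hA1
    · exact hA2.1.1 (st.hI2 s hsS z hA2.2 hB1)
    · -- z ∈ Bad t s ∩ cl (U s), z ∈ Bad r t ∩ (U r)ᶜ
      obtain ⟨q, hq1, hq2, hq3⟩ := st.hI3 r hrS s hsS hrs z hA2.2 hB2.2 hA2.1.1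
      rcases le_total q t with h | h
      · exact hB2.1.2 q hq1 ⟨hq2, h⟩
      · exact hA2.1.2 q hq1 ⟨h, hq3⟩
    · rw [Set.mem_setOf_eq] at hB3
      obtain ⟨rfl, htv⟩ := hB3
      rcases le_or_gt (s:ℝ) v with hsv | hsv
      · exact st.hI4a s hsS hsv hA2.2
      · obtain ⟨qv, hqv1, hqv2⟩ := hvF hA2.1.1
        refine hA2.1.2 qv hqv2 ⟨?_, ?_⟩
        · have : (t:ℝ) ≤ (qv:ℝ) := by rw [hqv1]; exact htv
          exact_mod_cast this
        · have : (qv:ℝ) ≤ (s:ℝ) := by rw [hqv1]; exact hsv.le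
          exact_mod_cast this
    · rw [Set.mem_setOf_eq] at hA3
      obtain ⟨rfl, hvt⟩ := hA3
      exact hB1 (st.hI4b s hsS (hvt.trans (by exact_mod_cast hts)))
    · rw [Set.mem_setOf_eq] at hA3
      obtain ⟨rfl, hvt⟩ := hA3
      rcases le_or_gt v (r:ℝ) with hrv | hrv
      · rcases eq_or_lt_of_le hrv with heq | hlt
        · -- v = r
          obtain ⟨qv, hqv1, hqv2⟩ := hvF hB2.1.1
          refine hB2.1.2 qv hqv2 ⟨?_, ?_⟩
          · have : (r:ℝ) ≤ (qv:ℝ) := by rw [hqv1, ← heq]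
            exact_mod_cast this
          · have : (qv:ℝ) ≤ (t:ℝ) := by rw [hqv1]; exact hvt.le
            exact_mod_cast this
        · exact hB2.2 (st.hI4b r hrS hlt)
      · obtain ⟨qv, hqv1, hqv2⟩ := hvF hB2.1.1
        refine hB2.1.2 qv hqv2 ⟨?_, ?_⟩
        · have : (r:ℝ) ≤ (qv:ℝ) := by rw [hqv1]; exact hrv.le
          exact_mod_cast this
        · have : (qv:ℝ) ≤ (t:ℝ) := by rw [hqv1]; exact hvt.le
          exact_mod_cast this
    · rw [Set.mem_setOf_eq] at hA3 hB3
      linarith [hA3.2, hB3.2]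
  obtain ⟨W, V', hWopen, hV'open, hAW, hBV, hWV, hWVzero⟩ := sep_cl hX hAclosed hBclosed hdisj
  -- basic consequences of the separation
  have hclWV : Disjoint (closure W) V' := hWV.closure_left hV'open
  have hA1 : closure (st.U r) ⊆ A := (Set.subset_union_left).trans Set.subset_union_left
  have hA2 : BadSet ζ t s ∩ closure (st.U s) ⊆ A :=
    (Set.subset_union_right).trans Set.subset_union_left
  have hB1 : (st.U s)ᶜ ⊆ B := (Set.subset_union_left).trans Set.subset_union_left
  have hB2 : BadSet ζ r t ∩ (st.U r)ᶜ ⊆ B :=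
    (Set.subset_union_right).trans Set.subset_union_left
  have hclWs : closure W ⊆ st.U s := by
    intro z hz
    by_contra hzs
    exact Set.disjoint_left.mp hclWV hz (hBV (hB1 hzs))
  have hclUrW : closure (st.U r) ⊆ W := hA1.trans hAW
  have hbadtsW : BadSet ζ t s ∩ closure (st.U s) ⊆ W := hA2.trans hAW
  have hbadrtW : ∀ z, z ∈ BadSet ζ r t → z ∉ st.U r → z ∉ closure W := by
    intro z h1 h2 hz
    exact Set.disjoint_left.mp hclWV hz (hBV (hB2 ⟨h1, h2⟩))
  have hbdW : ∀ z ∈ closure W, z ∉ W → ζ z = 0 := by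
    intro z hz hzW
    refine hWVzero z ?_
    rw [Set.mem_compl_iff, Set.mem_union, not_or]
    exact ⟨hzW, Set.disjoint_left.mp hclWV hz⟩
  have hxW : v < (t:ℝ) → x ∈ W := fun h =>
    hAW ((Set.subset_union_right) ⟨rfl, h⟩)
  have hxnW : (t:ℝ) ≤ v → x ∉ closure W := fun h hx =>
    Set.disjoint_left.mp hclWV hx (hBV ((Set.subset_union_right) ⟨rfl, h⟩))
  have htne : ∀ q ∈ st.S, q ≠ t := fun q hq h => htS (h ▸ hq)
  have hupd : ∀ q ∈ st.S, Function.update st.U t W q = st.U q := fun q hq =>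
    Function.update_of_ne (htne q hq) _ _
  have hupdt : Function.update st.U t W t = W := Function.update_self _ _ _
  refine ⟨⟨insert t st.S, Function.update st.U t W,
    Finset.mem_insert_of_mem st.mem0, Finset.mem_insert_of_mem st.mem1,
    ?_, ?_, ?_, ?_, ?_, ?_, ?_⟩, Finset.subset_insert _ _, hupd, Finset.mem_insert_self _ _⟩
  · -- hrange
    intro q hq
    rcases Finset.mem_insert.mp hq with rfl | hq'
    · exact ⟨ht0.le, ht1.le⟩
    · exact st.hrange q hq'
  · -- hopen
    intro q hq
    rcases Finset.mem_insert.mp hq with rfl | hq'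
    · rw [hupdt]; exact hWopen
    · rw [hupd q hq']; exact st.hopen q hq'
  · -- hI1
    intro a ha b hb hab
    rcases Finset.mem_insert.mp ha with rfl | ha' <;> rcases Finset.mem_insert.mp hb with rfl | hb'
    · exact absurd hab (lt_irrefl _)
    · rw [hupdt, hupd b hb']
      rcases eq_or_lt_of_le (hsmin b hb' hab) with rfl | hsb
      · exact hclWs
      · exact hclWs.trans (subset_closure.trans (st.hI1 s hsS b hb' hsb))
    · rw [hupdt, hupd a ha']
      rcases eq_or_lt_of_le (hrmax a ha' hab) with rfl | har
      · exact hclUrW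
      · exact (st.hI1 a ha' r hrS har).trans (subset_closure.trans hclUrW)
    · rw [hupd a ha', hupd b hb']
      exact st.hI1 a ha' b hb' hab
  · -- hI2
    intro a ha z hz hz'
    rcases Finset.mem_insert.mp ha with rfl | ha'
    · rw [hupdt] at hz hz'
      exact hbdW z hz hz'
    · rw [hupd a ha'] at hz hz'
      exact st.hI2 a ha' z hz hz'
  · -- hI3
    intro a ha b hb hab z hzb hza hζ
    rcases Finset.mem_insert.mp ha with h0 | ha'
    · rcases Finset.mem_insert.mp hb with h0' | hb'
      · rw [h0, h0'] at hab; exact absurd hab (lt_irrefl _)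
      · -- lower endpoint is t
        rw [h0] at hab hza ⊢
        rw [hupdt] at hza
        rw [hupd b hb'] at hzb
        by_cases hzs : z ∈ closure (st.U s)
        · have hnb : z ∉ BadSet ζ t s := fun hbad => hza (hbadtsW ⟨hbad, hzs⟩)
          obtain ⟨q, h1, h2, h3⟩ := not_badSet hζ hnb
          exact ⟨q, h1, h2, h3.trans (hsmin b hb' hab)⟩
        · have hsb : s < b := by
            rcases eq_or_lt_of_le (hsmin b hb' hab) with heq | h
            · rw [heq] at hzs; exact absurd hzb hzs
            · exact h
          obtain ⟨q, h1, h2, h3⟩ := st.hI3 s hsS b hb' hsb z hzb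
            (fun h => hzs (subset_closure h)) hζ
          exact ⟨q, h1, hts.le.trans h2, h3⟩
    · rcases Finset.mem_insert.mp hb with h0' | hb'
      · -- upper endpoint is t
        rw [h0'] at hab hzb ⊢
        rw [hupdt] at hzb
        rw [hupd a ha'] at hza
        by_cases hzr : z ∈ st.U r
        · have har : a < r := by
            rcases eq_or_lt_of_le (hrmax a ha' hab) with heq | h
            · rw [← heq] at hzr; exact absurd hzr hza
            · exact h
          obtain ⟨q, h1, h2, h3⟩ := st.hI3 a ha' r hrS har z (subset_closure hzr) hza hζ
          exact ⟨q, h1, h2, h3.trans hrt.le⟩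
        · have hnb : z ∉ BadSet ζ r t := fun hbad => (hbadrtW z hbad hzr) hzb
          obtain ⟨q, h1, h2, h3⟩ := not_badSet hζ hnb
          exact ⟨q, h1, (hrmax a ha' hab).trans h2, h3⟩
      · rw [hupd a ha'] at hza
        rw [hupd b hb'] at hzb
        exact st.hI3 a ha' b hb' hab z hzb hza hζ
  · -- hI4a
    intro a ha hav
    rcases Finset.mem_insert.mp ha with rfl | ha'
    · rw [hupdt]; exact hxnW hav
    · rw [hupd a ha']; exact st.hI4a a ha' hav
  · -- hI4b
    intro a ha hva
    rcases Finset.mem_insert.mp ha with rfl | ha'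
    · rw [hupdt]; exact hxW hva
    · rw [hupd a ha']; exact st.hI4b a ha' hva

lemma step_ex' (hX : ANormal ζ)
    (hvF : ζ x ≠ 0 → ∃ qv : ℚ, (qv : ℝ) = v ∧ qv.den ∣ ζ x)
    (st : AState ζ x v) (t : ℚ) :
    ∃ st' : AState ζ x v, st.S ⊆ st'.S ∧ (∀ q ∈ st.S, st'.U q = st.U q) ∧
      (0 < t → t < 1 → t ∈ st'.S) := by
  by_cases htS : t ∈ st.S
  · exact ⟨st, subset_rfl, fun q _ => rfl, fun _ _ => htS⟩
  by_cases ht0 : 0 < t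
  · by_cases ht1 : t < 1
    · obtain ⟨st', h1, h2, h3⟩ := step_ex hX hvF st t ht0 ht1 htS
      exact ⟨st', h1, h2, fun _ _ => h3⟩
    · exact ⟨st, subset_rfl, fun q _ => rfl, fun _ h => absurd h ht1⟩
  · exact ⟨st, subset_rfl, fun q _ => rfl, fun h _ => absurd h ht0⟩

noncomputable def chain (hX : ANormal ζ) (hx : x = x)
    (hvF : ζ x ≠ 0 → ∃ qv : ℚ, (qv : ℝ) = v ∧ qv.den ∣ ζ x)
    (hv0 : 0 < v) (hv1 : v < 1) (e : ℕ → ℚ) : ℕ → AState ζ x v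
  | 0 => initState hv0 hv1
  | (k+1) => (step_ex' hX hvF (chain hX hx hvF hv0 hv1 e k) (e k)).choose

lemma chain_succ (hX : ANormal ζ)
    (hvF : ζ x ≠ 0 → ∃ qv : ℚ, (qv : ℝ) = v ∧ qv.den ∣ ζ x)
    (hv0 : 0 < v) (hv1 : v < 1) (e : ℕ → ℚ) (k : ℕ) :
    (chain hX rfl hvF hv0 hv1 e k).S ⊆ (chain hX rfl hvF hv0 hv1 e (k+1)).S ∧
    (∀ q ∈ (chain hX rfl hvF hv0 hv1 e k).S,
      (chain hX rfl hvF hv0 hv1 e (k+1)).U q = (chain hX rfl hvF hv0 hv1 e k).U q) ∧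
    (0 < e k → e k < 1 → e k ∈ (chain hX rfl hvF hv0 hv1 e (k+1)).S) := by
  have h := Exists.choose_spec (step_ex' hX hvF (chain hX rfl hvF hv0 hv1 e k) (e k))
  exact h

lemma chain_mono (hX : ANormal ζ)
    (hvF : ζ x ≠ 0 → ∃ qv : ℚ, (qv : ℝ) = v ∧ qv.den ∣ ζ x)
    (hv0 : 0 < v) (hv1 : v < 1) (e : ℕ → ℚ) {k l : ℕ} (hkl : k ≤ l) :
    (chain hX rfl hvF hv0 hv1 e k).S ⊆ (chain hX rfl hvF hv0 hv1 e l).S ∧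
    (∀ q ∈ (chain hX rfl hvF hv0 hv1 e k).S,
      (chain hX rfl hvF hv0 hv1 e l).U q = (chain hX rfl hvF hv0 hv1 e k).U q) := by
  induction l, hkl using Nat.le_induction with
  | base => exact ⟨subset_rfl, fun q _ => rfl⟩
  | succ l hkl ih =>
    obtain ⟨h1, h2, _⟩ := chain_succ hX hvF hv0 hv1 e l
    exact ⟨ih.1.trans h1, fun q hq => (h2 q (ih.1 hq)).trans (ih.2 q hq)⟩

lemma main_construction (hX : ANormal ζ) (hv0 : 0 < v) (hv1 : v < 1)
    (hvF : ζ x ≠ 0 → ∃ qv : ℚ, (qv : ℝ) = v ∧ qv.den ∣ ζ x) :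
    ∃ f : X → ℝ, Continuous f ∧ (∀ z, f z ∈ Set.Icc (0 : ℝ) 1) ∧
      (∀ z, den (f z) ∣ ζ z) ∧ f x = v := by
  classical
  obtain ⟨e, he⟩ := exists_surjective_nat ℚ
  set C : ℕ → AState ζ x v := chain hX rfl hvF hv0 hv1 e with hC
  have hmono := fun {k l : ℕ} (h : k ≤ l) => chain_mono hX hvF hv0 hv1 e h
  have hNex : ∀ q : ℚ, ∃ k : ℕ, (0 ≤ q → q ≤ 1 → q ∈ (C k).S) := by
    intro q
    rcases eq_or_ne q 0 with rfl | hq0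
    · exact ⟨0, fun _ _ => (C 0).mem0⟩
    rcases eq_or_ne q 1 with rfl | hq1
    · exact ⟨0, fun _ _ => (C 0).mem1⟩
    obtain ⟨k, hk⟩ := he q
    refine ⟨k + 1, fun h0 h1 => ?_⟩
    have := (chain_succ hX hvF hv0 hv1 e k).2.2
    rw [hk] at this
    exact this (lt_of_le_of_ne h0 (Ne.symm hq0)) (lt_of_le_of_ne h1 hq1)
  choose N hN using hNex
  set UU : ℚ → Set X := fun q => (C (N q)).U q with hUU
  have hstab : ∀ k, ∀ q ∈ (C k).S, (C k).U q = UU q := by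
    intro k q hq
    obtain ⟨h0, h1⟩ := (C k).hrange q hq
    have hqN : q ∈ (C (N q)).S := hN q h0 h1
    rcases le_total k (N q) with h | h
    · exact ((hmono h).2 q hq).symm
    · exact (hmono h).2 q hqN
  have hmem : ∀ q : ℚ, 0 ≤ q → q ≤ 1 → ∀ k, q ∈ (C k).S → True := fun _ _ _ _ _ => trivial
  -- global invariants
  have hGopen : ∀ q : ℚ, 0 ≤ q → q ≤ 1 → IsOpen (UU q) := by
    intro q h0 h1
    rw [← hstab (N q) q (hN q h0 h1)]
    exact (C (N q)).hopen q (hN q h0 h1)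
  have hpair : ∀ r s : ℚ, 0 ≤ r → r ≤ 1 → 0 ≤ s → s ≤ 1 →
      ∃ k, r ∈ (C k).S ∧ s ∈ (C k).S := by
    intro r s hr0 hr1 hs0 hs1
    refine ⟨max (N r) (N s), (hmono (le_max_left _ _)).1 (hN r hr0 hr1),
      (hmono (le_max_right _ _)).1 (hN s hs0 hs1)⟩
  have hG1 : ∀ r s : ℚ, 0 ≤ r → s ≤ 1 → r < s → closure (UU r) ⊆ UU s := by
    intro r s hr0 hs1 hrs
    obtain ⟨k, hrk, hsk⟩ := hpair r s hr0 (le_trans hrs.le hs1) (le_trans hr0 hrs.le) hs1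
    rw [← hstab k r hrk, ← hstab k s hsk]
    exact (C k).hI1 r hrk s hsk hrs
  have hG3 : ∀ r s : ℚ, 0 ≤ r → s ≤ 1 → r < s → ∀ z, z ∈ closure (UU s) → z ∉ UU r →
      ζ z ≠ 0 → ∃ q : ℚ, q.den ∣ ζ z ∧ r ≤ q ∧ q ≤ s := by
    intro r s hr0 hs1 hrs z hzs hzr hζ
    obtain ⟨k, hrk, hsk⟩ := hpair r s hr0 (le_trans hrs.le hs1) (le_trans hr0 hrs.le) hs1
    rw [← hstab k r hrk] at hzr
    rw [← hstab k s hsk] at hzs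
    exact (C k).hI3 r hrk s hsk hrs z hzs hzr hζ
  have hG4a : ∀ r : ℚ, 0 ≤ r → r ≤ 1 → (r : ℝ) ≤ v → x ∉ closure (UU r) := by
    intro r h0 h1 hrv
    rw [← hstab (N r) r (hN r h0 h1)]
    exact (C (N r)).hI4a r (hN r h0 h1) hrv
  have hG4b : ∀ r : ℚ, 0 ≤ r → r ≤ 1 → v < (r : ℝ) → x ∈ UU r := by
    intro r h0 h1 hvr
    rw [← hstab (N r) r (hN r h0 h1)]
    exact (C (N r)).hI4b r (hN r h0 h1) hvr
  -- the function
  set E : X → Set ℝ := fun z =>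
    insert (1 : ℝ) ((fun q : ℚ => (q : ℝ)) '' {q : ℚ | 0 ≤ q ∧ q ≤ 1 ∧ z ∈ UU q}) with hE
  have hbdd : ∀ z, BddBelow (E z) := by
    intro z
    refine ⟨0, ?_⟩
    rintro y (rfl | ⟨q, ⟨hq0, _, _⟩, rfl⟩)
    · norm_num
    · show (0:ℝ) ≤ (q:ℝ)
      exact_mod_cast hq0
  have hne : ∀ z, (E z).Nonempty := fun z => ⟨1, Set.mem_insert _ _⟩
  set f : X → ℝ := fun z => sInf (E z) with hf
  have hfmem : ∀ z q, 0 ≤ q → q ≤ 1 → z ∈ UU q → (q:ℝ) ∈ E z := by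
    intro z q h0 h1 hz
    exact Set.mem_insert_of_mem _ ⟨q, ⟨h0, h1, hz⟩, rfl⟩
  have hfle : ∀ z q, 0 ≤ q → q ≤ 1 → z ∈ UU q → f z ≤ (q:ℝ) := by
    intro z q h0 h1 hz
    exact csInf_le (hbdd z) (hfmem z q h0 h1 hz)
  have h01 : ∀ z, f z ∈ Set.Icc (0:ℝ) 1 := by
    intro z
    constructor
    · refine le_csInf (hne z) ?_
      rintro y (rfl | ⟨q, ⟨hq0, _, _⟩, rfl⟩)
      · norm_num
      · show (0:ℝ) ≤ (q:ℝ)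
        exact_mod_cast hq0
    · exact csInf_le (hbdd z) (Set.mem_insert _ _)
  have hlt : ∀ z (a : ℝ), f z < a → a ≤ 1 →
      ∃ q : ℚ, 0 ≤ q ∧ q ≤ 1 ∧ z ∈ UU q ∧ (q:ℝ) < a := by
    intro z a hfa ha1
    obtain ⟨y, hy, hya⟩ := exists_lt_of_csInf_lt (hne z) hfa
    rcases hy with rfl | ⟨q, ⟨hq0, hq1, hq⟩, rfl⟩
    · exact absurd (lt_of_lt_of_le hya ha1) (lt_irrefl _)
    · exact ⟨q, hq0, hq1, hq, hya⟩
  have hcont : Continuous f := by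
    refine continuous_iff_continuousAt.mpr (fun z => ?_)
    refine tendsto_order.mpr ⟨?_, ?_⟩
    · intro b hb
      rcases lt_or_ge b 0 with hb0 | hb0
      · exact Filter.Eventually.of_forall (fun w => lt_of_lt_of_le hb0 (h01 w).1)
      · obtain ⟨ρ, hρ1, hρ2⟩ := exists_rat_btwn hb
        obtain ⟨σ, hσ1, hσ2⟩ := exists_rat_btwn hρ2
        have hρ0 : 0 ≤ ρ := by
          have : (0:ℝ) ≤ ρ := le_trans hb0 hρ1.le
          exact_mod_cast this
        have hσ1' : σ ≤ 1 := by
          have : (σ:ℝ) ≤ 1 := le_trans hσ2.le (h01 z).2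
          exact_mod_cast this
        have hρσ : ρ < σ := by exact_mod_cast hσ1
        have hzρ : z ∉ closure (UU ρ) := by
          intro hzc
          have : z ∈ UU σ := hG1 ρ σ hρ0 hσ1' hρσ hzc
          exact absurd (hfle z σ (le_trans hρ0 hρσ.le) hσ1' this) (not_le.mpr hσ2)
        refine Filter.eventually_iff_exists_mem.mpr
          ⟨(closure (UU ρ))ᶜ, isClosed_closure.isOpen_compl.mem_nhds hzρ, fun w hw => ?_⟩
        have : (ρ:ℝ) ≤ f w := by
          refine le_csInf (hne w) ?_
          rintro y (rfl | ⟨q, ⟨hq0, hq1, hq⟩, rfl⟩)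
          · exact le_trans hρ2.le (h01 z).2
          · by_contra hqρ
            push_neg at hqρ
            have hqρ' : q < ρ := by exact_mod_cast hqρ
            exact hw (subset_closure (hG1 q ρ hq0
              (le_trans hρσ.le hσ1') hqρ' (subset_closure hq)))
        exact lt_of_lt_of_le hρ1 this
    · intro b hb
      rcases le_or_gt b 1 with hb1 | hb1
      · obtain ⟨q, hq0, hq1, hq, hqb⟩ := hlt z b hb hb1
        refine Filter.eventually_iff_exists_mem.mpr
          ⟨UU q, (hGopen q hq0 hq1).mem_nhds hq, fun w hw => ?_⟩
        exact lt_of_le_of_lt (hfle w q hq0 hq1 hw) hqb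
      · exact Filter.Eventually.of_forall (fun w => lt_of_le_of_lt (h01 w).2 hb1)
  have hfx : f x = v := by
    refine le_antisymm ?_ ?_
    · by_contra h
      push_neg at h
      obtain ⟨q, hq1, hq2⟩ := exists_rat_btwn (lt_min h hv1)
      have hq0 : 0 ≤ q := by
        have : (0:ℝ) ≤ q := le_trans hv0.le hq1.le
        exact_mod_cast this
      have hq1' : q ≤ 1 := by
        have : (q:ℝ) ≤ 1 := (lt_of_lt_of_le hq2 (min_le_right _ _)).le
        exact_mod_cast this
      have : x ∈ UU q := hG4b q hq0 hq1' hq1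
      exact absurd (hfle x q hq0 hq1' this)
        (not_le.mpr (lt_of_lt_of_le hq2 (min_le_left _ _)))
    · refine le_csInf (hne x) ?_
      rintro y (rfl | ⟨q, ⟨hq0, hq1, hq⟩, rfl⟩)
      · exact hv1.le
      · by_contra hqv
        push_neg at hqv
        exact (hG4a q hq0 hq1 hqv.le) (subset_closure hq)
  refine ⟨f, hcont, h01, ?_, hfx⟩
  -- divisibility
  intro z
  by_cases hm : ζ z = 0
  · rw [hm]; exact dvd_zero _
  suffices h : ∃ q : ℚ, (q:ℝ) = f z ∧ q.den ∣ ζ z by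
    obtain ⟨q, hq1, hq2⟩ := h
    rw [← hq1, den_ratCast]
    exact hq2
  by_contra hc
  push_neg at hc
  -- the set of admissible fractions is finite and closed
  set Qm : Set ℚ := {q : ℚ | q.den ∣ ζ z ∧ 0 ≤ q ∧ q ≤ 1} with hQm
  have hQmfin : Qm.Finite := by
    have hsub : Qm ⊆ (fun p : ℤ × ℕ => (p.1 : ℚ) / (p.2 : ℚ)) ''
        (Set.Icc (0:ℤ) (ζ z) ×ˢ Set.Icc 1 (ζ z)) := by
      rintro q ⟨hden, hq0, hq1⟩
      have hdpos : (0:ℚ) < (q.den : ℚ) := by exact_mod_cast q.pos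
      have hnum0 : 0 ≤ q.num := Rat.num_nonneg.mpr hq0
      have hnumden : q.num ≤ (q.den : ℤ) := by
        have h2 := (Rat.le_iff _ _).mp hq1
        simpa using h2
      have hdenle : q.den ≤ ζ z := Nat.le_of_dvd (Nat.pos_of_ne_zero hm) hden
      refine ⟨(q.num, q.den), ⟨⟨hnum0, ?_⟩, ⟨q.pos, hdenle⟩⟩, ?_⟩
      · exact le_trans hnumden (by exact_mod_cast hdenle)
      · exact Rat.num_div_den q
    exact Set.Finite.subset (Set.Finite.image _
      ((Set.finite_Icc _ _).prod (Set.finite_Icc _ _))) hsub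
  set G : Set ℝ := (fun q : ℚ => (q : ℝ)) '' Qm with hG
  have hGfin : G.Finite := hQmfin.image _
  have ht0G : f z ∉ G := by
    rintro ⟨q, hq, hqf⟩
    exact hc q hqf hq.1
  obtain ⟨ε, hε, hball⟩ := Metric.isOpen_iff.mp hGfin.isClosed.isOpen_compl (f z) ht0G
  have h0G : (0:ℝ) ∈ G := ⟨0, ⟨by simp, le_refl _, by norm_num⟩, by norm_num⟩
  have h1G : (1:ℝ) ∈ G := ⟨1, ⟨by simp, by norm_num, le_refl _⟩, by norm_num⟩
  have ht0pos : 0 < f z := lt_of_le_of_ne (h01 z).1 (fun h => ht0G (h ▸ h0G))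
  have ht0lt1 : f z < 1 := lt_of_le_of_ne (h01 z).2 (fun h => ht0G (h.symm ▸ h1G))
  obtain ⟨ρ, hρ1, hρ2⟩ := exists_rat_btwn (max_lt (by linarith) ht0pos :
    max (f z - ε) 0 < f z)
  obtain ⟨σ, hσ1, hσ2⟩ := exists_rat_btwn (lt_min (by linarith) ht0lt1 :
    f z < min (f z + ε) 1)
  have hρ0 : 0 ≤ ρ := by
    have : (0:ℝ) ≤ (ρ:ℝ) := le_trans (le_max_right _ _) hρ1.le
    exact_mod_cast this
  have hσle1 : σ ≤ 1 := by
    have : (σ:ℝ) ≤ 1 := le_trans hσ2.le (min_le_right _ _)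
    exact_mod_cast this
  have hρσ : ρ < σ := by
    have : (ρ:ℝ) < (σ:ℝ) := hρ2.trans hσ1
    exact_mod_cast this
  have hzρ : z ∉ UU ρ := by
    intro h
    have hρle1 : ρ ≤ 1 := by
      have h2 : (ρ:ℝ) < 1 := hρ2.trans ht0lt1
      exact_mod_cast h2.le
    exact absurd (hfle z ρ hρ0 hρle1 h) (not_le.mpr hρ2)
  have hzσ : z ∈ closure (UU σ) := by
    obtain ⟨q', hq'0, hq'1, hq', hq'σ⟩ := hlt z (σ:ℝ) hσ1 (by exact_mod_cast hσle1)
    have hq'σ' : q' < σ := by exact_mod_cast hq'σ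
    exact subset_closure (hG1 q' σ hq'0 hσle1 hq'σ' (subset_closure hq'))
  obtain ⟨q, hq1, hq2, hq3⟩ := hG3 ρ σ hρ0 hσle1 hρσ z hzσ hzρ hm
  have hqball : (q:ℝ) ∈ Metric.ball (f z) ε := by
    rw [Metric.mem_ball, Real.dist_eq, abs_lt]
    constructor
    · have : (ρ:ℝ) ≤ (q:ℝ) := by exact_mod_cast hq2
      have h2 : f z - ε < (ρ:ℝ) := lt_of_le_of_lt (le_max_left _ _) hρ1
      linarith
    · have : (q:ℝ) ≤ (σ:ℝ) := by exact_mod_cast hq3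
      have h2 : (σ:ℝ) < f z + ε := lt_of_lt_of_le hσ2 (min_le_left _ _)
      linarith
  have hqG : (q:ℝ) ∈ G :=
    ⟨q, ⟨hq1, le_trans hρ0 hq2, le_trans hq3 hσle1⟩, rfl⟩
  exact hball hqball hqG

lemma den_irrational {r : ℝ} (h : Irrational r) : den r = 0 := by
  unfold den
  rw [dif_neg]
  rintro ⟨q, rfl⟩
  exact h ⟨q, rfl⟩

theorem aspace_amap_attaining_denominator'
    {Y : Type*} [TopologicalSpace Y] (ξ : Y → ℕ) (hY : ANormal ξ) (y : Y) :
    ∃ f : Y → ℝ, Continuous f ∧ (∀ z, f z ∈ Set.Icc (0 : ℝ) 1) ∧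
      (∀ z, den (f z) ∣ ξ z) ∧ den (f y) = ξ y := by
  rcases eq_or_ne (ξ y) 1 with h1 | h1
  · -- constant 0
    refine ⟨fun _ => 0, continuous_const, fun z => ⟨le_refl _, by norm_num⟩, ?_, ?_⟩
    · intro z
      rw [show (0:ℝ) = ((0:ℚ):ℝ) by norm_num, den_ratCast]
      exact one_dvd _
    · rw [show (0:ℝ) = ((0:ℚ):ℝ) by norm_num, den_ratCast, h1]
      rfl
  rcases eq_or_ne (ξ y) 0 with h0 | h0
  · -- irrational value
    set v : ℝ := Real.sqrt 2 - 1 with hv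
    have hs2 : Real.sqrt 2 ^ 2 = 2 := Real.sq_sqrt (by norm_num)
    have hsnn : 0 ≤ Real.sqrt 2 := Real.sqrt_nonneg 2
    have hv0 : 0 < v := by nlinarith
    have hv1 : v < 1 := by nlinarith
    obtain ⟨f, hf1, hf2, hf3, hf4⟩ := main_construction hY hv0 hv1
      (fun h => absurd h0 (fun _ => h h0))
    · refine ⟨f, hf1, hf2, hf3, ?_⟩
      rw [hf4, h0]
      refine den_irrational ?_
      have := irrational_sqrt_two.sub_intCast 1
      simpa using this
  · -- rational value 1/n with n ≥ 2
    have hn2 : 2 ≤ ξ y := by omega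
    set vq : ℚ := ((ξ y : ℚ))⁻¹ with hvq
    have hnq : (1:ℚ) < (ξ y : ℚ) := by exact_mod_cast hn2
    have hvq0 : 0 < vq := inv_pos.mpr (lt_trans one_pos hnq)
    have hvq1 : vq < 1 := inv_lt_one_of_one_lt₀ hnq
    have hden : vq.den = ξ y := by
      rw [hvq, Rat.inv_natCast_den, if_neg h0]
    have hv0 : (0:ℝ) < (vq:ℝ) := by exact_mod_cast hvq0
    have hv1 : (vq:ℝ) < 1 := by exact_mod_cast hvq1
    obtain ⟨f, hf1, hf2, hf3, hf4⟩ := main_construction hY hv0 hv1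
      (fun _ => ⟨vq, rfl, by rw [hden]⟩)
    refine ⟨f, hf1, hf2, hf3, ?_⟩
    rw [hf4, den_ratCast, hden]


end AuxAspace

/-- In an a-normal space, for every point `x` there is an a-map
`f : X → [0,1]` attaining denominator `ζ x` at `x`. -/
theorem aspace_amap_attaining_denominator
    {X : Type*} [TopologicalSpace X] (ζ : X → ℕ) (hX : ANormal ζ) (x : X) :
    ∃ f : X → ℝ, Continuous f ∧ (∀ z, f z ∈ Set.Icc (0 : ℝ) 1) ∧
      (∀ z, den (f z) ∣ ζ z) ∧ den (f x) = ζ x := by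
  exact aspace_amap_attaining_denominator' ζ hX x
end

section
/- Let X be an a-normal space with denominator function ζ. Then there exist a set I and a map g : X → [0,1]^I ⊆ ℝ^I (product topology) that is injective, continuous, and closed (hence a homeomorphism onto its image, which is a closed subset of [0,1]^I), and such that den(g(x)) = ζ(x) for every x ∈ X. Consequently, (X,ζ) is isomorphic as an a-space to (K,den) for a closed subset K of [0,1]^I. -/
/-- The least common multiple of a set of naturals, computed in `ℕ` ordered by
divisibility with `0` as top element. -/
noncomputable def setLcm (S : Set ℕ) : ℕ :=
  sInf {n | (∀ s ∈ S, s ∣ n) ∧ ∀ m : ℕ, (∀ s ∈ S, s ∣ m) → n ∣ m}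

/-- The denominator of a point of `ℝ^I`. -/
noncomputable def denV {I : Type*} (x : I → ℝ) : ℕ :=
  setLcm (Set.range fun i => den (x i))

section AUX
lemma setLcm_eq {S : Set ℕ} {n : ℕ} (h1 : ∀ s ∈ S, s ∣ n)
    (h2 : ∀ m : ℕ, (∀ s ∈ S, s ∣ m) → n ∣ m) : setLcm S = n := by
  have : {k | (∀ s ∈ S, s ∣ k) ∧ ∀ m : ℕ, (∀ s ∈ S, s ∣ m) → k ∣ m} = {n} := by
    ext t
    simp only [Set.mem_setOf_eq, Set.mem_singleton_iff]
    constructor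
    · rintro ⟨ht1, ht2⟩
      exact Nat.dvd_antisymm (ht2 n h1) (h2 t ht1)
    · rintro rfl; exact ⟨h1, h2⟩
  rw [setLcm, this, csInf_singleton]


lemma ceil_between {q t s : ℚ} {n : ℕ} (h1 : q ≤ t) (h2 : t ≤ s)
    (he : ⌈q * (n:ℚ)⌉ = ⌈s * (n:ℚ)⌉) : ⌈t * (n:ℚ)⌉ = ⌈q * (n:ℚ)⌉ := by
  have hn0 : (0:ℚ) ≤ n := by positivity
  have a1 := Int.ceil_le_ceil (R := ℚ) (mul_le_mul_of_nonneg_right h1 hn0)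
  have a2 := Int.ceil_le_ceil (R := ℚ) (mul_le_mul_of_nonneg_right h2 hn0)
  omega

lemma ceil_gap {q s : ℚ} {n : ℕ} (he : ⌈q * (n:ℚ)⌉ = ⌈s * (n:ℚ)⌉) :
    |s - q| * n < 1 := by
  have h1 : q * n ≤ ⌈q * (n:ℚ)⌉ := Int.le_ceil _
  have h2 : s * n ≤ ⌈s * (n:ℚ)⌉ := Int.le_ceil _
  have h3 : (⌈q * (n:ℚ)⌉ : ℚ) < q * n + 1 := Int.ceil_lt_add_one _
  have h4 : (⌈s * (n:ℚ)⌉ : ℚ) < s * n + 1 := Int.ceil_lt_add_one _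
  rw [he] at h1 h3
  have : |s - q| * n = |s * n - q * n| := by
    rw [← sub_mul, abs_mul, abs_of_nonneg (by positivity : (0:ℚ) ≤ (n:ℚ))]
  rw [this, abs_sub_lt_iff]
  constructor <;> linarith

lemma ceil_dvd_trans {q s : ℚ} {g n : ℕ} (hg : 1 ≤ g) (hn : 1 ≤ n) (hgn : g ∣ n)
    (he : ⌈q * (n:ℚ)⌉ = ⌈s * (n:ℚ)⌉) : ⌈q * (g:ℚ)⌉ = ⌈s * (g:ℚ)⌉ := by
  obtain ⟨c, hc⟩ := hgn
  have hc1 : 1 ≤ c := by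
    rcases Nat.eq_zero_or_pos c with h | h
    · subst h; simp at hc; omega
    · exact h
  have key : ∀ q s : ℚ, q ≤ s → ⌈q * (n:ℚ)⌉ = ⌈s * (n:ℚ)⌉ →
      ¬ (⌈q * (g:ℚ)⌉ < ⌈s * (g:ℚ)⌉) := by
    intro q s hqs he hlt
    set k := ⌈q * (g:ℚ)⌉ with hk
    have hk1 : q * g ≤ (k:ℚ) := Int.le_ceil _
    have hk2 : (k:ℚ) < s * g := Int.lt_ceil.1 hlt
    have hcq : (0:ℚ) < c := by exact_mod_cast hc1
    have e1 : q * (n:ℚ) ≤ ((k * c : ℤ):ℚ) := by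
      push_cast
      calc q * (n:ℚ) = (q * g) * c := by rw [hc]; push_cast; ring
        _ ≤ k * c := mul_le_mul_of_nonneg_right hk1 (le_of_lt hcq)
    have e2 : ((k * c : ℤ):ℚ) < s * (n:ℚ) := by
      push_cast
      calc (k:ℚ) * c < (s * g) * c := mul_lt_mul_of_pos_right hk2 hcq
        _ = s * n := by rw [hc]; push_cast; ring
    have f1 : ⌈q * (n:ℚ)⌉ ≤ k * c := Int.ceil_le.2 e1
    have f2 : k * c < ⌈s * (n:ℚ)⌉ := Int.lt_ceil.2 e2
    omega
  rcases le_total q s with h | h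
  · have g1 := Int.ceil_le_ceil (R := ℚ)
      (mul_le_mul_of_nonneg_right h (by positivity : (0:ℚ) ≤ (g:ℚ)))
    have g2 := key q s h he
    omega
  · have g1 := Int.ceil_le_ceil (R := ℚ)
      (mul_le_mul_of_nonneg_right h (by positivity : (0:ℚ) ≤ (g:ℚ)))
    have g2 := key s q h he.symm
    omega

lemma int_of_den_dvd {α : ℚ} {n : ℕ} (h : α.den ∣ n) :
    ∃ k : ℤ, (k:ℚ) = α * n := by
  obtain ⟨c, hc⟩ := h
  refine ⟨α.num * c, ?_⟩
  rw [hc]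
  push_cast
  rw [show ((α.num:ℚ)) * c = (α * α.den) * c by rw [Rat.mul_den_eq_num]]
  ring

lemma alpha_block {α r s : ℚ} {n : ℕ} (hn : 1 ≤ n) (hden : α.den ∣ n)
    (h1 : r ≤ α) (h2 : α < s) (he : ⌈r * (n:ℚ)⌉ = ⌈s * (n:ℚ)⌉) : False := by
  obtain ⟨k, hk⟩ := int_of_den_dvd hden
  have h3 : ⌈α * (n:ℚ)⌉ = ⌈r * (n:ℚ)⌉ := ceil_between h1 (le_of_lt h2) he
  have h4 : ⌈α * (n:ℚ)⌉ = k := by rw [← hk, Int.ceil_intCast]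
  have h5 : k < ⌈s * (n:ℚ)⌉ := by
    apply Int.lt_ceil.2
    rw [hk]
    have : (0:ℚ) < n := by exact_mod_cast hn
    exact mul_lt_mul_of_pos_right h2 this
  omega


section Sep

variable {X : Type*} [TopologicalSpace X] {ζ : X → ℕ}

lemma strongSep (hX : ANormal ζ) {C D : Set X} (hC : IsClosed C) (hD : IsClosed D)
    (h : Disjoint C D) :
    ∃ U V : Set X, IsOpen U ∧ IsOpen V ∧ C ⊆ U ∧ D ⊆ V ∧ Disjoint U V ∧
      ∀ z ∈ (U ∪ V)ᶜ, ζ z = 0 := by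
  obtain ⟨hcomp, ht2, hN2, hN3⟩ := hX
  have step1 : ∀ x ∉ D, ∃ U V : Set X, IsOpen U ∧ IsOpen V ∧ x ∈ U ∧ D ⊆ V ∧
      Disjoint U V ∧ ∀ z ∈ (U ∪ V)ᶜ, ζ z = 0 := by
    intro x hx
    have hDc : IsCompact D := hD.isCompact
    choose U V hU hV hxU hyV hdisj hz using
      fun y : D => hN3 x y.1 (fun he => hx (he ▸ y.2))
    obtain ⟨t, ht⟩ := hDc.elim_finite_subcover V hV
      (fun y hy => Set.mem_iUnion.2 ⟨⟨y, hy⟩, hyV ⟨y, hy⟩⟩)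
    refine ⟨⋂ y ∈ t, U y, ⋃ y ∈ t, V y, isOpen_biInter_finset (fun y _ => hU y),
      isOpen_biUnion (fun y _ => hV y), Set.mem_iInter₂.2 (fun y _ => hxU y), ht, ?_, ?_⟩
    · rw [Set.disjoint_iUnion₂_right]
      intro y hy
      exact Set.disjoint_left.2 fun z hz1 hz2 =>
        (Set.disjoint_left.1 (hdisj y)) (Set.mem_iInter₂.1 hz1 y hy) hz2
    · intro z hz'
      simp only [Set.mem_compl_iff, Set.mem_union, Set.mem_iInter, Set.mem_iUnion] at hz'
      push_neg at hz'
      obtain ⟨⟨y, hy, hzU⟩, hzV⟩ := hz'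
      exact hz y z (by simp [Set.mem_compl_iff, hzU, hzV y hy])
  -- step 2
  have hCc : IsCompact C := hC.isCompact
  choose U V hU hV hxU hDV hdisj hz using
    fun x : C => step1 x.1 (fun hxD => Set.disjoint_left.1 h x.2 hxD)
  obtain ⟨t, ht⟩ := hCc.elim_finite_subcover U hU
    (fun x hx => Set.mem_iUnion.2 ⟨⟨x, hx⟩, hxU ⟨x, hx⟩⟩)
  refine ⟨⋃ x ∈ t, U x, ⋂ x ∈ t, V x, isOpen_biUnion (fun x _ => hU x),
    isOpen_biInter_finset (fun x _ => hV x), ht, Set.subset_iInter₂ (fun x _ => hDV x), ?_, ?_⟩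
  · rw [Set.disjoint_iUnion₂_left]
    intro x hx
    exact Set.disjoint_left.2 fun z hz1 hz2 =>
      (Set.disjoint_left.1 (hdisj x)) hz1 (Set.mem_iInter₂.1 hz2 x hx)
  · intro z hz'
    simp only [Set.mem_compl_iff, Set.mem_union, Set.mem_iInter, Set.mem_iUnion] at hz'
    push_neg at hz'
    obtain ⟨hzU, ⟨x, hx, hzV⟩⟩ := hz'
    exact hz x z (by simp [Set.mem_compl_iff, hzU x hx, hzV])

/-- L1: thickening with boundary in the zero set. -/
lemma shrink (hX : ANormal ζ) {C G : Set X} (hC : IsClosed C) (hG : IsOpen G)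
    (hCG : C ⊆ G) :
    ∃ O : Set X, IsOpen O ∧ C ⊆ O ∧ closure O ⊆ G ∧
      ∀ z ∈ closure O, z ∈ O ∨ ζ z = 0 := by
  obtain ⟨U, V, hU, hV, hCU, hGV, hdisj, hz⟩ :=
    strongSep hX hC (isClosed_compl_iff.2 hG)
      (Set.disjoint_left.2 fun z hzC hzG => hzG (hCG hzC))
  have hclU : closure U ⊆ Vᶜ :=
    closure_minimal (fun z hzU hzV => Set.disjoint_left.1 hdisj hzU hzV) (isClosed_compl_iff.2 hV)
  refine ⟨U, hU, hCU, ?_, ?_⟩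
  · intro z hzc
    by_contra hzG
    exact (hclU hzc) (hGV hzG)
  · intro z hzc
    by_cases hzU : z ∈ U
    · exact Or.inl hzU
    · exact Or.inr (hz z (by simp [Set.mem_compl_iff, hzU, fun h => hclU hzc h]))

end Sep
section CORE
variable {X : Type*} [TopologicalSpace X]
variable (ζ : X → ℕ)

def Xn (n : ℕ) : Set X := {z | ζ z ∣ n}

lemma Xn_closed (hX : ANormal ζ) (n : ℕ) : IsClosed (Xn ζ n) := hX.2.2.1 n

structure Fam (x y : X) (α : ℚ) (dom : Finset ℚ) (U : ℚ → Set X) : Prop where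
  zero_mem : (0:ℚ) ∈ dom
  one_mem : (1:ℚ) ∈ dom
  le01 : ∀ q ∈ dom, 0 ≤ q ∧ q ≤ 1
  U0 : U 0 = ∅
  opn : ∀ q ∈ dom, IsOpen (U q)
  bdry : ∀ q ∈ dom, ∀ z ∈ closure (U q), z ∈ U q ∨ ζ z = 0
  mono : ∀ q ∈ dom, ∀ s ∈ dom, q < s → closure (U q) ⊆ U s
  cls : ∀ n : ℕ, 1 ≤ n → ∀ q ∈ dom, ∀ s ∈ dom, 0 < q → 0 < s →
      ⌈q * (n:ℚ)⌉ = ⌈s * (n:ℚ)⌉ → U q ∩ Xn ζ n = U s ∩ Xn ζ n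
  memx : ∀ q ∈ dom, (α < q → x ∈ U q) ∧ (q ≤ α → x ∉ U q) ∧ (q < α → x ∉ closure (U q))
  memy : ∀ q ∈ dom, y ∉ closure (U q)

variable {ζ}

lemma zeta_ne_zero {z : X} {n : ℕ} (hn : 1 ≤ n) (hz : z ∈ Xn ζ n) : ζ z ≠ 0 := by
  intro h0
  rw [Xn, Set.mem_setOf_eq, h0] at hz
  omega

lemma trace_closed (hX : ANormal ζ) {x y : X} {α : ℚ} {dom : Finset ℚ} {U : ℚ → Set X}
    (hI : Fam ζ x y α dom U) {q : ℚ} (hq : q ∈ dom) {n : ℕ} (hn : 1 ≤ n) :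
    IsClosed (U q ∩ Xn ζ n) := by
  apply isClosed_of_closure_subset
  intro z hz
  have h1 : z ∈ closure (U q) ∩ Xn ζ n := by
    constructor
    · exact closure_mono Set.inter_subset_left hz
    · exact (Xn_closed ζ hX n).closure_subset
        (closure_mono Set.inter_subset_right hz)
  rcases hI.bdry q hq z h1.1 with h | h
  · exact ⟨h, h1.2⟩
  · exact absurd h (zeta_ne_zero hn h1.2)

end CORE

lemma exists_max_lt (dom : Finset ℚ) (m : ℚ) (h0 : (0:ℚ) ∈ dom) (hm0 : 0 < m) :
    ∃ a ∈ dom, a < m ∧ ∀ q ∈ dom, q < m → q ≤ a := by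
  have hfa : (dom.filter (fun q => q < m)).Nonempty :=
    ⟨0, Finset.mem_filter.2 ⟨h0, hm0⟩⟩
  refine ⟨(dom.filter (fun q => q < m)).max' hfa,
    (Finset.mem_filter.1 (Finset.max'_mem _ hfa)).1,
    (Finset.mem_filter.1 (Finset.max'_mem _ hfa)).2,
    fun q hq hqm => Finset.le_max' (dom.filter (fun q => q < m)) q (Finset.mem_filter.2 ⟨hq, hqm⟩)⟩
lemma exists_min_gt (dom : Finset ℚ) (m : ℚ) (h1 : (1:ℚ) ∈ dom) (hm1 : m < 1) :
    ∃ b ∈ dom, m < b ∧ ∀ q ∈ dom, m < q → b ≤ q := by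
  have hfb : (dom.filter (fun q => m < q)).Nonempty :=
    ⟨1, Finset.mem_filter.2 ⟨h1, hm1⟩⟩
  refine ⟨(dom.filter (fun q => m < q)).min' hfb,
    (Finset.mem_filter.1 (Finset.min'_mem _ hfb)).1,
    (Finset.mem_filter.1 (Finset.min'_mem _ hfb)).2,
    fun q hq hqm => Finset.min'_le (dom.filter (fun q => m < q)) q (Finset.mem_filter.2 ⟨hq, hqm⟩)⟩



section STEP
variable {X : Type*} [TopologicalSpace X] {ζ : X → ℕ}

set_option maxHeartbeats 1000000 in
lemma step (hX : ANormal ζ) {x y : X} (hxy : x ≠ y) {α : ℚ} (hdx : α.den ∣ ζ x)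
    {dom : Finset ℚ} {U : ℚ → Set X} (hI : Fam ζ x y α dom U)
    {m : ℚ} (hm0 : 0 < m) (hm1 : m < 1) (hm : m ∉ dom) :
    ∃ U' : ℚ → Set X, Fam ζ x y α (insert m dom) U' ∧ ∀ q ∈ dom, U' q = U q := by
  classical
  haveI : T2Space X := hX.2.1
  obtain ⟨a, hadom, ham, hamax⟩ := exists_max_lt dom m hI.zero_mem hm0
  obtain ⟨b, hbdom, hbm, hbmin⟩ := exists_min_gt dom m hI.one_mem hm1
  have hab : a < b := ham.trans hbm
  have hb0 : 0 < b := hm0.trans hbm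
  set CM : Set (ℕ × ℚ) :=
    {p | 1 ≤ p.1 ∧ p.2 ∈ dom ∧ 0 < p.2 ∧ ⌈p.2 * (p.1:ℚ)⌉ = ⌈m * (p.1:ℚ)⌉} with hCMdef
  have hCMmem : ∀ p : ℕ × ℚ, p ∈ CM ↔
      1 ≤ p.1 ∧ p.2 ∈ dom ∧ 0 < p.2 ∧ ⌈p.2 * (p.1:ℚ)⌉ = ⌈m * (p.1:ℚ)⌉ :=
    fun p => Iff.rfl
  have hCMfin : CM.Finite := by
    apply Set.Finite.subset (Set.Finite.biUnion dom.finite_toSet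
      (fun q (_ : q ∈ (dom : Set ℚ)) =>
        (Set.finite_Icc 1 (⌈(1/|q - m|:ℚ)⌉.toNat)).image (fun n => (n, q))))
    rintro ⟨n, q⟩ hp
    rw [hCMmem] at hp
    obtain ⟨h1, h2, h3, h4⟩ := hp
    refine Set.mem_biUnion h2 ⟨n, ?_, rfl⟩
    have hqm : q ≠ m := fun h => hm (h ▸ h2)
    have hgap : |m - q| * n < 1 := ceil_gap h4
    have hpos : (0:ℚ) < |q - m| := abs_pos.2 (sub_ne_zero.2 hqm)
    have h5 : (n:ℚ) < 1 / |q - m| := by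
      rw [lt_div_iff₀ hpos, abs_sub_comm q m]
      linarith [hgap]
    have h6 : (n:ℤ) < ⌈(1/|q-m|:ℚ)⌉ + 1 := by
      have hle := Int.le_ceil ((1:ℚ)/|q-m|)
      have : (n:ℚ) < ((⌈(1/|q-m|:ℚ)⌉ : ℤ) : ℚ) + 1 := by linarith
      exact_mod_cast this
    have h7 : n ≤ (⌈(1/|q-m|:ℚ)⌉).toNat := by omega
    exact Set.mem_Icc.2 ⟨h1, h7⟩
  set P : Set X := ⋃ p ∈ CM, (U p.2 ∩ Xn ζ p.1) with hPdef
  set Q : Set X := ⋃ p ∈ CM, (Xn ζ p.1 \ U p.2) with hQdef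
  have hPc : IsClosed P := hCMfin.isClosed_biUnion
    (fun p hp => trace_closed hX hI ((hCMmem p).1 hp).2.1 ((hCMmem p).1 hp).1)
  have hQc : IsClosed Q := hCMfin.isClosed_biUnion
    (fun p hp => (Xn_closed ζ hX p.1).sdiff (hI.opn p.2 ((hCMmem p).1 hp).2.1))
  have hPQ : ∀ z, z ∈ P → z ∈ Q → False := by
    intro z hzP hzQ
    obtain ⟨p, hp, hz1⟩ := Set.mem_iUnion₂.1 hzP
    obtain ⟨p', hp', hz2⟩ := Set.mem_iUnion₂.1 hzQ
    obtain ⟨n, q⟩ := p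
    obtain ⟨n', q'⟩ := p'
    rw [hCMmem] at hp hp'
    have hg1 : 1 ≤ Nat.gcd n n' := Nat.gcd_pos_of_pos_left n' (by omega : 0 < n)
    have hzg : z ∈ Xn ζ (Nat.gcd n n') := Nat.dvd_gcd hz1.2 hz2.1
    have e1 : ⌈q * (Nat.gcd n n' :ℚ)⌉ = ⌈m * (Nat.gcd n n' :ℚ)⌉ :=
      ceil_dvd_trans hg1 hp.1 (Nat.gcd_dvd_left _ _) hp.2.2.2
    have e2 : ⌈q' * (Nat.gcd n n' :ℚ)⌉ = ⌈m * (Nat.gcd n n' :ℚ)⌉ :=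
      ceil_dvd_trans hg1 hp'.1 (Nat.gcd_dvd_right _ _) hp'.2.2.2
    have heq := hI.cls (Nat.gcd n n') hg1 q hp.2.1 q' hp'.2.1 hp.2.2.1 hp'.2.2.1
      (e1.trans e2.symm)
    have hmem : z ∈ U q' ∩ Xn ζ (Nat.gcd n n') :=
      heq ▸ (⟨hz1.1, hzg⟩ : z ∈ U q ∩ Xn ζ (Nat.gcd n n'))
    exact hz2.2 hmem.1
  have hPb : P ⊆ U b := by
    intro z hz
    obtain ⟨p, hp, hz1⟩ := Set.mem_iUnion₂.1 hz
    obtain ⟨n, q⟩ := p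
    rw [hCMmem] at hp
    have hqm : q ≠ m := fun h => hm (h ▸ hp.2.1)
    rcases lt_or_gt_of_ne hqm with hlt | hgt
    · exact hI.mono q hp.2.1 b hbdom (hlt.trans hbm) (subset_closure hz1.1)
    · have hbq : b ≤ q := hbmin q hp.2.1 hgt
      rcases eq_or_lt_of_le hbq with he | hlt2
      · rw [← he] at hz1; exact hz1.1
      · have e : ⌈b * (n:ℚ)⌉ = ⌈m * (n:ℚ)⌉ :=
          ceil_between (le_of_lt hbm) (le_of_lt hlt2) hp.2.2.2.symm
        have heq := hI.cls n hp.1 q hp.2.1 b hbdom hp.2.2.1 hb0 (hp.2.2.2.trans e.symm)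
        exact (heq ▸ hz1).1
  have hclaQ : ∀ z, z ∈ closure (U a) → z ∉ Q := by
    intro z hza hzQ
    obtain ⟨p, hp, hz2⟩ := Set.mem_iUnion₂.1 hzQ
    obtain ⟨n, q⟩ := p
    rw [hCMmem] at hp
    have hzU : z ∈ U a := by
      rcases hI.bdry a hadom z hza with h | h
      · exact h
      · exact absurd h (zeta_ne_zero hp.1 hz2.1)
    have hqm : q ≠ m := fun h => hm (h ▸ hp.2.1)
    rcases lt_or_gt_of_ne hqm with hlt | hgt
    · have hqa : q ≤ a := hamax q hp.2.1 hlt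
      rcases eq_or_lt_of_le hqa with he | hlt2
      · rw [he] at hz2; exact hz2.2 hzU
      · have e : ⌈a * (n:ℚ)⌉ = ⌈q * (n:ℚ)⌉ :=
          ceil_between (le_of_lt hlt2) (le_of_lt ham) hp.2.2.2
        have ha0 : 0 < a := lt_trans hp.2.2.1 hlt2
        have heq := hI.cls n hp.1 a hadom q hp.2.1 ha0 hp.2.2.1 e
        exact hz2.2 ((heq ▸ (⟨hzU, hz2.1⟩ : z ∈ U a ∩ Xn ζ n)) : z ∈ U q ∩ Xn ζ n).1
    · exact hz2.2 (hI.mono a hadom q hp.2.1 (ham.trans hgt) hza)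
  have hyP : y ∉ P := by
    intro hyP
    obtain ⟨p, hp, hz⟩ := Set.mem_iUnion₂.1 hyP
    exact hI.memy p.2 ((hCMmem p).1 hp).2.1 (subset_closure hz.1)
  have hxP : m ≤ α → x ∉ P := by
    intro hma hxP
    obtain ⟨p, hp, hz⟩ := Set.mem_iUnion₂.1 hxP
    obtain ⟨n, q⟩ := p
    rw [hCMmem] at hp
    have hαq : α < q := by
      by_contra hcon
      push_neg at hcon
      exact (hI.memx q hp.2.1).2.1 hcon hz.1
    exact alpha_block hp.1 (dvd_trans hdx hz.2) hma hαq hp.2.2.2.symm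
  have hxQ : α < m → x ∉ Q := by
    intro hαm hxQ
    obtain ⟨p, hp, hz⟩ := Set.mem_iUnion₂.1 hxQ
    obtain ⟨n, q⟩ := p
    rw [hCMmem] at hp
    have hqα : q ≤ α := by
      by_contra hcon
      push_neg at hcon
      exact hz.2 ((hI.memx q hp.2.1).1 hcon)
    exact alpha_block hp.1 (dvd_trans hdx hz.1) hqα hαm hp.2.2.2
  -- the new open set
  set Cset : Set X := closure (U a) ∪ P ∪ (if α < m then {x} else ∅) with hCsetdef
  set Gset : Set X := U b \ (Q ∪ {y} ∪ (if α < m then ∅ else {x})) with hGsetdef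
  have hCc : IsClosed Cset := by
    refine ((isClosed_closure.union hPc).union ?_)
    split
    · exact isClosed_singleton
    · exact isClosed_empty
  have hGo : IsOpen Gset := by
    apply (hI.opn b hbdom).sdiff
    refine (hQc.union isClosed_singleton).union ?_
    split
    · exact isClosed_empty
    · exact isClosed_singleton
  have hyQ' : y ∉ closure (U a) := hI.memy a hadom
  have hCG : Cset ⊆ Gset := by
    intro z hz
    rcases hz with (hz | hz) | hz
    · refine ⟨hI.mono a hadom b hbdom hab hz, ?_⟩
      intro hzbad
      rcases hzbad with (h | h) | h
      · exact hclaQ z hz h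
      · rw [Set.mem_singleton_iff] at h; subst h; exact hyQ' hz
      · by_cases hc : α < m
        · rw [if_pos hc] at h; exact h
        · rw [if_neg hc] at h
          rw [Set.mem_singleton_iff] at h; subst h
          push_neg at hc
          exact (hI.memx a hadom).2.2 (lt_of_lt_of_le ham hc) hz
    · refine ⟨hPb hz, ?_⟩
      intro hzbad
      rcases hzbad with (h | h) | h
      · exact hPQ z hz h
      · rw [Set.mem_singleton_iff] at h; subst h; exact hyP hz
      · by_cases hc : α < m
        · rw [if_pos hc] at h; exact h
        · rw [if_neg hc] at h
          rw [Set.mem_singleton_iff] at h; subst h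
          push_neg at hc
          exact hxP hc hz
    · by_cases hc : α < m
      · rw [if_pos hc, Set.mem_singleton_iff] at hz; subst hz
        refine ⟨(hI.memx b hbdom).1 (hc.trans hbm), ?_⟩
        intro hzbad
        rcases hzbad with (h | h) | h
        · exact hxQ hc h
        · rw [Set.mem_singleton_iff] at h; exact hxy h
        · rw [if_pos hc] at h; exact h
      · rw [if_neg hc] at hz; exact absurd hz (Set.notMem_empty x)
  obtain ⟨O, hOo, hCO, hOG, hObd⟩ := shrink hX hCc hGo hCG
  have hU'm : Function.update U m O m = O := Function.update_self _ _ _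
  have hupd : ∀ q ∈ dom, Function.update U m O q = U q := by
    intro q hq
    have hqm : q ≠ m := fun h => hm (h ▸ hq)
    exact Function.update_of_ne hqm _ _
  refine ⟨Function.update U m O, ?_, hupd⟩
  -- helper: closure O ⊆ U b and avoids bad set
  have hOb : closure O ⊆ U b := fun z hz => (hOG hz).1
  have hOQ : ∀ z ∈ closure O, z ∉ Q := fun z hz hq => (hOG hz).2 (Or.inl (Or.inl hq))
  have hOy : y ∉ closure O := fun hz => (hOG hz).2 (Or.inl (Or.inr rfl))
  have hOx : ¬ (α < m) → x ∉ closure O := by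
    intro hc hz
    refine (hOG hz).2 (Or.inr ?_)
    rw [if_neg hc]; rfl
  -- trace equality for the new set
  have htrace : ∀ n : ℕ, 1 ≤ n → ∀ s ∈ dom, 0 < s → ⌈m * (n:ℚ)⌉ = ⌈s * (n:ℚ)⌉ →
      O ∩ Xn ζ n = U s ∩ Xn ζ n := by
    intro n hn s hs hs0 he
    have hsCM : (n, s) ∈ CM := (hCMmem (n,s)).2 ⟨hn, hs, hs0, he.symm⟩
    apply Set.Subset.antisymm
    · intro z hz
      by_contra hcon
      have hzn : z ∈ Xn ζ n := hz.2
      have : z ∈ Q := Set.mem_biUnion hsCM ⟨hzn, fun hzU => hcon ⟨hzU, hzn⟩⟩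
      exact hOQ z (subset_closure hz.1) this
    · intro z hz
      have : z ∈ P := Set.mem_biUnion hsCM hz
      exact ⟨hCO (Or.inl (Or.inr this)), hz.2⟩
  constructor
  case zero_mem => exact Finset.mem_insert_of_mem hI.zero_mem
  case one_mem => exact Finset.mem_insert_of_mem hI.one_mem
  case le01 =>
    intro q hq
    rcases Finset.mem_insert.1 hq with rfl | hq
    · exact ⟨le_of_lt hm0, le_of_lt hm1⟩
    · exact hI.le01 q hq
  case U0 => rw [Function.update_of_ne hm0.ne _ _, hI.U0]
  case opn =>
    intro q hq
    rcases Finset.mem_insert.1 hq with rfl | hq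
    · rw [hU'm]; exact hOo
    · rw [hupd q hq]; exact hI.opn q hq
  case bdry =>
    intro q hq
    rcases Finset.mem_insert.1 hq with rfl | hq
    · rw [hU'm]; exact hObd
    · rw [hupd q hq]; exact hI.bdry q hq
  case mono =>
    intro q hq s hs hqs
    by_cases hqm' : q = m
    · by_cases hsm' : s = m
      · rw [hqm', hsm'] at hqs; exact absurd hqs (lt_irrefl _)
      · have hs' : s ∈ dom := (Finset.mem_insert.1 hs).resolve_left hsm'
        rw [hqm', hU'm, hupd s hs']
        have hms : m < s := by rw [hqm'] at hqs; exact hqs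
        have hbs : b ≤ s := hbmin s hs' hms
        rcases eq_or_lt_of_le hbs with heq | hlt
        · exact fun z hz => heq ▸ (hOb hz)
        · exact fun z hz => hI.mono b hbdom s hs' hlt (subset_closure (hOb hz))
    · have hq' : q ∈ dom := (Finset.mem_insert.1 hq).resolve_left hqm'
      by_cases hsm' : s = m
      · rw [hsm', hU'm, hupd q hq']
        have hqm2 : q < m := by rw [hsm'] at hqs; exact hqs
        have hqa : q ≤ a := hamax q hq' hqm2
        rcases eq_or_lt_of_le hqa with heq | hlt
        · exact fun z hz => hCO (Or.inl (Or.inl (heq ▸ hz)))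
        · exact fun z hz => hCO (Or.inl (Or.inl (subset_closure (hI.mono q hq' a hadom hlt hz))))
      · have hs' : s ∈ dom := (Finset.mem_insert.1 hs).resolve_left hsm'
        rw [hupd q hq', hupd s hs']; exact hI.mono q hq' s hs' hqs
  case cls =>
    intro n hn q hq s hs hq0 hs0 he
    by_cases hqm' : q = m
    · by_cases hsm' : s = m
      · rw [hqm', hsm']
      · have hs' : s ∈ dom := (Finset.mem_insert.1 hs).resolve_left hsm'
        rw [hqm', hU'm, hupd s hs']
        exact htrace n hn s hs' hs0 (by rw [← hqm']; exact he)
    · have hq' : q ∈ dom := (Finset.mem_insert.1 hq).resolve_left hqm'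
      by_cases hsm' : s = m
      · rw [hsm', hU'm, hupd q hq']
        exact (htrace n hn q hq' hq0 (by rw [← hsm']; exact he.symm)).symm
      · have hs' : s ∈ dom := (Finset.mem_insert.1 hs).resolve_left hsm'
        rw [hupd q hq', hupd s hs']; exact hI.cls n hn q hq' s hs' hq0 hs0 he
  case memx =>
    intro q hq
    rcases Finset.mem_insert.1 hq with rfl | hq
    · rw [hU'm]
      refine ⟨?_, ?_, ?_⟩
      · intro hαq
        exact hCO (Or.inr (by rw [if_pos hαq]; rfl))
      · intro hqα hxO
        have hc : ¬ (α < q) := not_lt.2 hqα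
        exact hOx hc (subset_closure hxO)
      · intro hqα
        exact hOx (not_lt.2 (le_of_lt hqα))
    · rw [hupd q hq]; exact hI.memx q hq
  case memy =>
    intro q hq
    rcases Finset.mem_insert.1 hq with rfl | hq
    · rw [hU'm]; exact hOy
    · rw [hupd q hq]; exact hI.memy q hq

end STEP
section URY
variable {X : Type*} [TopologicalSpace X] {ζ : X → ℕ}

set_option maxHeartbeats 1000000 in
lemma urysohn_a (hX : ANormal ζ) {x y : X} (hxy : x ≠ y) {α : ℚ}
    (hα0 : 0 ≤ α) (hα1 : α < 1) (hdx : α.den ∣ ζ x) :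
    ∃ f : X → ℝ, Continuous f ∧ (∀ z, f z ∈ Set.Icc (0:ℝ) 1) ∧
      (∀ z, ∀ n : ℕ, 1 ≤ n → ζ z ∣ n → ∃ k : ℤ, f z = (k:ℝ)/(n:ℝ)) ∧
      f x = (α:ℝ) ∧ f y = 1 := by
  classical
  haveI : T2Space X := hX.2.1
  -- base open set
  obtain ⟨O1, hO1o, hxO1, hO1G, hO1bd⟩ := shrink hX (isClosed_singleton (x := x))
    (isOpen_compl_singleton (x := y))
    (Set.singleton_subset_iff.2 (by simpa using hxy))
  have hxO1' : x ∈ O1 := Set.singleton_subset_iff.1 hxO1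
  have hyO1 : y ∉ closure O1 := fun h => hO1G h rfl
  have baseFam : Fam ζ x y α {0,1} (fun q => if q = 1 then O1 else ∅) := by
    constructor
    case zero_mem => simp
    case one_mem => simp
    case le01 =>
      intro q hq
      simp only [Finset.mem_insert, Finset.mem_singleton] at hq
      rcases hq with rfl | rfl <;> norm_num
    case U0 => norm_num
    case opn =>
      intro q _
      split
      · exact hO1o
      · exact isOpen_empty
    case bdry =>
      intro q _ z hz
      by_cases h : q = 1
      · rw [if_pos h] at hz; rw [if_pos h]; exact hO1bd z hz
      · rw [if_neg h, closure_empty] at hz; exact absurd hz (Set.notMem_empty z)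
    case mono =>
      intro q hq s hs hqs
      simp only [Finset.mem_insert, Finset.mem_singleton] at hq hs
      rcases hq with rfl | rfl <;> rcases hs with rfl | rfl
      · exact absurd hqs (lt_irrefl _)
      · norm_num [closure_empty]
      · norm_num at hqs
      · exact absurd hqs (lt_irrefl _)
    case cls =>
      intro n hn q hq s hs hq0 hs0 he
      simp only [Finset.mem_insert, Finset.mem_singleton] at hq hs
      rcases hq with rfl | rfl
      · exact absurd hq0 (lt_irrefl _)
      · rcases hs with rfl | rfl
        · exact absurd hs0 (lt_irrefl _)
        · rfl
    case memx =>
      intro q hq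
      simp only [Finset.mem_insert, Finset.mem_singleton] at hq
      rcases hq with rfl | rfl
      · refine ⟨fun h => absurd h (not_lt.2 hα0), fun _ => ?_, fun _ => ?_⟩
        · norm_num
        · norm_num [closure_empty]
      · refine ⟨fun _ => by norm_num [hxO1'], fun h => absurd h (not_le.2 hα1),
          fun h => absurd h (not_lt.2 (le_of_lt hα1))⟩
    case memy =>
      intro q hq
      simp only [Finset.mem_insert, Finset.mem_singleton] at hq
      rcases hq with rfl | rfl
      · norm_num [closure_empty]
      · norm_num [hyO1]
  -- enumeration of rationals
  set e : ℕ → ℚ := fun N => ((Encodable.decode N : Option ℚ)).getD 0 with he_def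
  have he : ∀ q : ℚ, e (Encodable.encode q) = q := by
    intro q
    simp [he_def, Encodable.encodek]
  -- the recursively constructed family
  have key : ∀ (t : {p : Finset ℚ × (ℚ → Set X) // Fam ζ x y α p.1 p.2}) (N : ℕ),
      ∃ t' : {p : Finset ℚ × (ℚ → Set X) // Fam ζ x y α p.1 p.2},
        (∀ q ∈ t.1.1, q ∈ t'.1.1 ∧ t'.1.2 q = t.1.2 q) ∧
        (0 < e N → e N < 1 → e N ∈ t'.1.1) := by
    intro t N
    by_cases h : 0 < e N ∧ e N < 1 ∧ e N ∉ t.1.1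
    · obtain ⟨U', hU'1, hU'2⟩ := step hX hxy hdx t.2 h.1 h.2.1 h.2.2
      exact ⟨⟨⟨insert (e N) t.1.1, U'⟩, hU'1⟩,
        fun q hq => ⟨Finset.mem_insert_of_mem hq, hU'2 q hq⟩,
        fun _ _ => Finset.mem_insert_self _ _⟩
    · push_neg at h
      exact ⟨t, fun q hq => ⟨hq, rfl⟩, fun h1 h2 => h h1 h2⟩
  choose stp hstp1 hstp2 using key
  obtain ⟨F, hF0, hFstep1, hFstep2⟩ :
      ∃ F : ℕ → {p : Finset ℚ × (ℚ → Set X) // Fam ζ x y α p.1 p.2},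
        (F 0).1.1 = {0,1} ∧
        (∀ N, ∀ q ∈ (F N).1.1, q ∈ (F (N+1)).1.1 ∧ (F (N+1)).1.2 q = (F N).1.2 q)
          ∧ ∀ N, (0 < e N → e N < 1 → e N ∈ (F (N+1)).1.1) := by
    refine ⟨fun N => Nat.rec
      (⟨({0,1}, fun q => if q = 1 then O1 else ∅), baseFam⟩ :
        {p : Finset ℚ × (ℚ → Set X) // Fam ζ x y α p.1 p.2})
      (fun N ih => stp ih N) N, rfl, fun N => hstp1 _ N, fun N => hstp2 _ N⟩
  -- stability
  have hmono : ∀ N M, N ≤ M → ∀ q ∈ (F N).1.1, q ∈ (F M).1.1 ∧ (F M).1.2 q = (F N).1.2 q := by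
    intro N M h
    induction M, h using Nat.le_induction with
    | base => exact fun q hq => ⟨hq, rfl⟩
    | succ M hNM ih =>
      intro q hq
      obtain ⟨h1, h2⟩ := ih q hq
      obtain ⟨h3, h4⟩ := hFstep1 M q h1
      exact ⟨h3, h4.trans h2⟩
  have hqdom : ∀ q : ℚ, 0 ≤ q → q ≤ 1 → q ∈ (F (Encodable.encode q + 1)).1.1 := by
    intro q h0 h1
    rcases eq_or_lt_of_le h0 with rfl | h0'
    · exact (F _).2.zero_mem
    · rcases eq_or_lt_of_le h1 with rfl | h1'
      · exact (F _).2.one_mem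
      · have := hFstep2 (Encodable.encode q)
        rw [he q] at this
        exact this h0' h1'
  set UF : ℚ → Set X := fun q => (F (Encodable.encode q + 1)).1.2 q with hUFdef
  have hagree : ∀ q : ℚ, 0 ≤ q → q ≤ 1 → ∀ N, q ∈ (F N).1.1 → (F N).1.2 q = UF q := by
    intro q h0 h1 N hq
    rcases le_total N (Encodable.encode q + 1) with h | h
    · exact ((hmono N _ h q hq).2).symm
    · exact (hmono _ N h q (hqdom q h0 h1)).2
  -- global invariants
  have Gopn : ∀ q : ℚ, 0 ≤ q → q ≤ 1 → IsOpen (UF q) := by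
    intro q h0 h1
    exact hagree q h0 h1 _ (hqdom q h0 h1) ▸ (F _).2.opn q (hqdom q h0 h1)
  have GU0 : UF 0 = ∅ := by
    rw [← hagree 0 le_rfl (by norm_num) (Encodable.encode (0:ℚ) + 1) (F _).2.zero_mem]
    exact (F _).2.U0
  have Gbdry : ∀ q : ℚ, 0 ≤ q → q ≤ 1 → ∀ z ∈ closure (UF q), z ∈ UF q ∨ ζ z = 0 := by
    intro q h0 h1
    rw [← hagree q h0 h1 _ (hqdom q h0 h1)]
    exact (F _).2.bdry q (hqdom q h0 h1)
  have Gmono : ∀ q s : ℚ, 0 ≤ q → q ≤ 1 → 0 ≤ s → s ≤ 1 → q < s →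
      closure (UF q) ⊆ UF s := by
    intro q s hq0 hq1 hs0 hs1 hqs
    have hNq := hmono _ (max (Encodable.encode q + 1) (Encodable.encode s + 1))
      (le_max_left _ _) q (hqdom q hq0 hq1)
    have hNs := hmono _ (max (Encodable.encode q + 1) (Encodable.encode s + 1))
      (le_max_right _ _) s (hqdom s hs0 hs1)
    have := (F _).2.mono q hNq.1 s hNs.1 hqs
    rwa [hagree q hq0 hq1 _ hNq.1, hagree s hs0 hs1 _ hNs.1] at this
  have Gcls : ∀ n : ℕ, 1 ≤ n → ∀ q s : ℚ, 0 < q → q ≤ 1 → 0 < s → s ≤ 1 →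
      ⌈q * (n:ℚ)⌉ = ⌈s * (n:ℚ)⌉ → UF q ∩ Xn ζ n = UF s ∩ Xn ζ n := by
    intro n hn q s hq0 hq1 hs0 hs1 he'
    have hNq := hmono _ (max (Encodable.encode q + 1) (Encodable.encode s + 1))
      (le_max_left _ _) q (hqdom q (le_of_lt hq0) hq1)
    have hNs := hmono _ (max (Encodable.encode q + 1) (Encodable.encode s + 1))
      (le_max_right _ _) s (hqdom s (le_of_lt hs0) hs1)
    have := (F _).2.cls n hn q hNq.1 s hNs.1 hq0 hs0 he'
    rwa [hagree q (le_of_lt hq0) hq1 _ hNq.1, hagree s (le_of_lt hs0) hs1 _ hNs.1] at this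
  have Gmemx : ∀ q : ℚ, 0 ≤ q → q ≤ 1 →
      (α < q → x ∈ UF q) ∧ (q ≤ α → x ∉ UF q) ∧ (q < α → x ∉ closure (UF q)) := by
    intro q h0 h1
    rw [← hagree q h0 h1 _ (hqdom q h0 h1)]
    exact (F _).2.memx q (hqdom q h0 h1)
  have Gmemy : ∀ q : ℚ, 0 ≤ q → q ≤ 1 → y ∉ closure (UF q) := by
    intro q h0 h1
    rw [← hagree q h0 h1 _ (hqdom q h0 h1)]
    exact (F _).2.memy q (hqdom q h0 h1)
  -- membership monotone
  have GmonoMem : ∀ q s : ℚ, 0 ≤ q → q ≤ 1 → 0 ≤ s → s ≤ 1 → q ≤ s →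
      ∀ z ∈ UF q, z ∈ UF s := by
    intro q s hq0 hq1 hs0 hs1 hqs z hz
    rcases eq_or_lt_of_le hqs with rfl | h
    · exact hz
    · exact Gmono q s hq0 hq1 hs0 hs1 h (subset_closure hz)
  -- the function
  set S : X → Set ℝ := fun z =>
    insert 1 {t | ∃ q : ℚ, 0 ≤ q ∧ q ≤ 1 ∧ z ∈ UF q ∧ t = (q:ℝ)} with hSdef
  have hSne : ∀ z, (S z).Nonempty := fun z => ⟨1, Set.mem_insert _ _⟩
  have hSbd : ∀ z, ∀ t ∈ S z, (0:ℝ) ≤ t := by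
    intro z t ht
    rcases ht with rfl | ⟨q, h0, _, _, rfl⟩
    · norm_num
    · exact_mod_cast h0
  have hSbdd : ∀ z, BddBelow (S z) := fun z => ⟨0, fun t ht => hSbd z t ht⟩
  set f : X → ℝ := fun z => sInf (S z) with hfdef
  have hf0 : ∀ z, 0 ≤ f z := fun z => le_csInf (hSne z) (hSbd z)
  have hf1 : ∀ z, f z ≤ 1 := fun z => csInf_le (hSbdd z) (Set.mem_insert _ _)
  have hfle : ∀ z, ∀ q : ℚ, 0 ≤ q → q ≤ 1 → z ∈ UF q → f z ≤ q :=
    fun z q h0 h1 hz => csInf_le (hSbdd z) (Set.mem_insert_of_mem _ ⟨q, h0, h1, hz, rfl⟩)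
  have hfge : ∀ z, ∀ q : ℚ, 0 ≤ q → q ≤ 1 → z ∉ UF q → (q:ℝ) ≤ f z := by
    intro z q h0 h1 hz
    apply le_csInf (hSne z)
    intro t ht
    rcases ht with rfl | ⟨s, hs0, hs1, hzs, rfl⟩
    · exact_mod_cast h1
    · by_contra hcon
      push_neg at hcon
      have hsq : s < q := by exact_mod_cast hcon
      exact hz (GmonoMem s q hs0 hs1 h0 h1 (le_of_lt hsq) z hzs)
  have hfmem : ∀ z, ∀ q : ℚ, 0 ≤ q → q ≤ 1 → f z < q → z ∈ UF q := by
    intro z q h0 h1 hlt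
    obtain ⟨t, ht, htq⟩ := exists_lt_of_csInf_lt (hSne z) hlt
    rcases ht with rfl | ⟨s, hs0, hs1, hzs, rfl⟩
    · have : (q:ℝ) ≤ 1 := by exact_mod_cast h1
      linarith
    · have hsq : s ≤ q := by
        have : (s:ℝ) < q := htq
        exact_mod_cast le_of_lt this
      exact GmonoMem s q hs0 hs1 h0 h1 hsq z hzs
  -- continuity
  have hcont : Continuous f := by
    rw [continuous_iff_continuousAt]
    intro z₀
    rw [ContinuousAt, tendsto_order]
    constructor
    · intro t ht
      rcases lt_or_ge t 0 with h | h
      · exact Filter.Eventually.of_forall (fun w => lt_of_lt_of_le h (hf0 w))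
      · obtain ⟨q, hq1, hq2⟩ := exists_rat_btwn ht
        obtain ⟨q', hq'1, hq'2⟩ := exists_rat_btwn hq2
        have hq0 : (0:ℚ) ≤ q := by exact_mod_cast le_of_lt (lt_of_le_of_lt h hq1)
        have hq'0 : (0:ℚ) ≤ q' := by
          exact_mod_cast le_of_lt (lt_of_le_of_lt h (hq1.trans hq'1))
        have hq'le : (q':ℚ) ≤ 1 := by
          have : (q':ℝ) < 1 := lt_of_lt_of_le hq'2 (hf1 z₀)
          exact_mod_cast le_of_lt this
        have hqle : (q:ℚ) ≤ 1 := by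
          have h9 : (q':ℝ) < 1 := lt_of_lt_of_le hq'2 (hf1 z₀)
          have : (q:ℝ) < 1 := hq'1.trans h9
          exact_mod_cast le_of_lt this
        have hnotin : z₀ ∉ closure (UF q) := by
          intro hin
          have : z₀ ∈ UF q' := Gmono q q' hq0 hqle hq'0 hq'le
            (by exact_mod_cast hq'1) hin
          have := hfle z₀ q' hq'0 hq'le this
          have h2 : (q':ℝ) < f z₀ := hq'2
          linarith
        refine Filter.eventually_of_mem
          (IsOpen.mem_nhds (isOpen_compl_iff.2 isClosed_closure) hnotin) ?_
        intro w hw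
        have : w ∉ UF q := fun h' => hw (subset_closure h')
        have := hfge w q hq0 hqle this
        have h1' : t < (q:ℝ) := hq1
        linarith
    · intro t ht
      rcases le_or_gt t 1 with h | h
      swap
      · exact Filter.Eventually.of_forall (fun w => lt_of_le_of_lt (hf1 w) h)
      · obtain ⟨q, hq1, hq2⟩ := exists_rat_btwn ht
        have hq0 : (0:ℚ) ≤ q := by
          have : (0:ℝ) ≤ q := le_of_lt (lt_of_le_of_lt (hf0 z₀) hq1)
          exact_mod_cast this
        have hqle : (q:ℚ) ≤ 1 := by
          have : (q:ℝ) ≤ 1 := le_of_lt (lt_of_lt_of_le hq2 h)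
          exact_mod_cast this
        have hzin : z₀ ∈ UF q := hfmem z₀ q hq0 hqle hq1
        refine Filter.eventually_of_mem (IsOpen.mem_nhds (Gopn q hq0 hqle) hzin) ?_
        intro w hw
        exact lt_of_le_of_lt (hfle w q hq0 hqle hw) hq2
  refine ⟨f, hcont, fun z => ⟨hf0 z, hf1 z⟩, ?_, ?_, ?_⟩
  · -- trace property
    intro z n hn hdvd
    have hzn : z ∈ Xn ζ n := hdvd
    have hn0 : (0:ℝ) < n := by exact_mod_cast hn
    rcases eq_or_lt_of_le (hf1 z) with heq | hlt
    · refine ⟨n, ?_⟩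
      rw [heq]
      push_cast
      rw [div_self (ne_of_gt hn0)]
    · set k : ℤ := ⌊f z * n⌋ with hkdef
      have hk0 : 0 ≤ k := Int.floor_nonneg.2 (mul_nonneg (hf0 z) (le_of_lt hn0))
      have hkle : (k:ℝ) ≤ f z * n := Int.floor_le _
      have hklt : f z * n < k + 1 := Int.lt_floor_add_one _
      rcases eq_or_lt_of_le hkle with heq2 | hlt2
      · refine ⟨k, ?_⟩
        rw [eq_div_iff (ne_of_gt hn0)]
        linarith [heq2]
      · exfalso
        have hdiv : (k:ℝ)/n < f z := by rw [div_lt_iff₀ hn0]; exact hlt2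
        obtain ⟨u, hu1, hu2⟩ := exists_rat_btwn hdiv
        have hfz1 : f z < min (((k:ℝ)+1)/n) 1 := by
          apply lt_min _ hlt
          rw [lt_div_iff₀ hn0]; exact hklt
        obtain ⟨v, hv1, hv2⟩ := exists_rat_btwn hfz1
        -- bounds
        have hu0 : 0 < u := by
          have : (0:ℝ) ≤ (k:ℝ)/n := by positivity
          have h2 : (0:ℝ) < u := lt_of_le_of_lt this hu1
          exact_mod_cast h2
        have hu1' : (u:ℚ) ≤ 1 := by
          have : (u:ℝ) < 1 := lt_of_lt_of_le hu2 (hf1 z)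
          exact_mod_cast le_of_lt this
        have hv0 : 0 < v := by
          have : (0:ℝ) < v := lt_of_le_of_lt (hf0 z) hv1
          exact_mod_cast this
        have hv1' : (v:ℚ) ≤ 1 := by
          have : (v:ℝ) < 1 := lt_of_lt_of_le hv2 (min_le_right _ _)
          exact_mod_cast le_of_lt this
        -- z ∈ UF v
        have hzv : z ∈ UF v := hfmem z v (le_of_lt hv0) hv1' hv1
        -- ceiling computations
        have hcu : ⌈(u:ℚ) * n⌉ = k + 1 := by
          have e1 : (k:ℚ) < u * n := by
            have h8 : (k:ℝ) < (u:ℝ) * n := (div_lt_iff₀ hn0).1 hu1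
            exact_mod_cast h8
          have e2 : (u:ℚ) * n ≤ ((k + 1 : ℤ) : ℚ) := by
            have h3 : (u:ℝ) < f z := hu2
            have h8 : (u:ℝ) * n ≤ (k:ℝ) + 1 := by nlinarith [hklt, hn0]
            push_cast
            exact_mod_cast h8
          have := Int.ceil_le.2 e2
          have h4 := Int.lt_ceil.2 e1
          omega
        have hcv : ⌈(v:ℚ) * n⌉ = k + 1 := by
          have e1 : (k:ℚ) < v * n := by
            have h8 : (k:ℝ) < (v:ℝ) * n := by nlinarith [hkle, hv1, hn0]
            exact_mod_cast h8
          have e2 : (v:ℚ) * n ≤ ((k + 1 : ℤ) : ℚ) := by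
            have h5 : (v:ℝ) < ((k:ℝ)+1)/n := lt_of_lt_of_le hv2 (min_le_left _ _)
            rw [lt_div_iff₀ hn0] at h5
            have h8 : (v:ℝ) * n ≤ (k:ℝ) + 1 := le_of_lt h5
            push_cast
            exact_mod_cast h8
          have := Int.ceil_le.2 e2
          have h4 := Int.lt_ceil.2 e1
          omega
        have heqtr := Gcls n hn u v hu0 hu1' hv0 hv1' (hcu.trans hcv.symm)
        have hzu : z ∈ UF u := by
          have h9 : z ∈ UF v ∩ Xn ζ n := ⟨hzv, hzn⟩
          rw [← heqtr] at h9
          exact h9.1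
        have := hfle z u (le_of_lt hu0) hu1' hzu
        have : (u:ℝ) < f z := hu2
        linarith [hfle z u (le_of_lt hu0) hu1' hzu]
  · -- f x = α
    apply le_antisymm
    · by_contra hcon
      push_neg at hcon
      have h1 : (α:ℝ) < min (f x) 1 := by
        apply lt_min hcon
        exact_mod_cast hα1
      obtain ⟨q, hq1, hq2⟩ := exists_rat_btwn h1
      have hq0 : (0:ℚ) ≤ q := le_of_lt (lt_of_le_of_lt hα0 (by exact_mod_cast hq1))
      have hqle : (q:ℚ) ≤ 1 := by
        have : (q:ℝ) < 1 := lt_of_lt_of_le hq2 (min_le_right _ _)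
        exact_mod_cast le_of_lt this
      have hxq : x ∈ UF q := (Gmemx q hq0 hqle).1 (by exact_mod_cast hq1)
      have := hfle x q hq0 hqle hxq
      have h2 : (q:ℝ) < f x := lt_of_lt_of_le hq2 (min_le_left _ _)
      linarith
    · apply le_csInf (hSne x)
      intro t ht
      rcases ht with rfl | ⟨s, hs0, hs1, hxs, rfl⟩
      · exact_mod_cast le_of_lt hα1
      · have : ¬ (s ≤ α) := fun h => (Gmemx s hs0 hs1).2.1 h hxs
        push_neg at this
        exact_mod_cast le_of_lt this
  · -- f y = 1
    apply le_antisymm (hf1 y)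
    apply le_csInf (hSne y)
    intro t ht
    rcases ht with rfl | ⟨s, hs0, hs1, hys, rfl⟩
    · exact le_refl _
    · exact absurd (subset_closure hys) (Gmemy s hs0 hs1)

end URY
lemma den_int_div (k : ℤ) (n : ℕ) (hn : 1 ≤ n) : den ((k:ℝ)/(n:ℝ)) ∣ n := by
  have h1 : ((k:ℝ))/(n:ℝ) = (((k / (n:ℤ) : ℚ)) : ℝ) := by push_cast; ring
  rw [h1, den_ratCast]
  have h2 : ((k : ℚ) / ((n:ℤ) : ℚ)) = Rat.divInt k (n:ℤ) := by
    rw [Rat.divInt_eq_div]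
  rw [h2]
  have h3 := Rat.den_dvd k (n:ℤ)
  exact_mod_cast h3

lemma den_zero : den (0:ℝ) = 1 := by
  have : ((0:ℚ):ℝ) = (0:ℝ) := by norm_num
  rw [← this, den_ratCast]
  rfl

lemma den_inv_nat (k : ℕ) (hk : 1 ≤ k) : den (((1:ℚ)/(k:ℚ) : ℚ) : ℝ) = k := by
  rw [den_ratCast, one_div, Rat.inv_natCast_den, if_neg (by omega)]

lemma den_one_div_den (k : ℕ) (hk : 1 ≤ k) : ((1:ℚ)/(k:ℚ)).den = k := by
  rw [one_div, Rat.inv_natCast_den, if_neg (by omega)]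


end AUX

/-- Every a-normal space `(X, ζ)` embeds, for some set `I`, into the
cube `[0,1]^I ⊆ ℝ^I` via a map `g` that is injective, continuous, and closed (hence a
homeomorphism onto its closed image) and satisfies `den (g x) = ζ x`; consequently
`(X, ζ)` is isomorphic as an a-space to `(K, den)` for a closed subset `K` of `[0,1]^I`. -/
theorem aNormal_embeds_in_cube
    {X : Type u} [TopologicalSpace X] (ζ : X → ℕ) (hX : ANormal ζ) :
    ∃ (I : Type u) (g : X → I → ℝ),
      (∀ x i, g x i ∈ Set.Icc (0 : ℝ) 1) ∧
      Function.Injective g ∧ Continuous g ∧ IsClosedMap g ∧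
      (∀ x, denV (g x) = ζ x) ∧
      IsClosed (Set.range g) ∧
      ∃ e : X ≃ₜ Set.range g, ∀ x : X, ((e x : Set.range g) : I → ℝ) = g x := by
  classical
  haveI hcomp : CompactSpace X := hX.1
  haveI ht2 : T2Space X := hX.2.1
  set I : Type u :=
    {f : X → ℝ // Continuous f ∧ (∀ z, f z ∈ Set.Icc (0:ℝ) 1) ∧ ∀ z, den (f z) ∣ ζ z}
    with hIdef
  set g : X → I → ℝ := fun z i => i.1 z with hgdef
  -- divisibility from the trace property
  have mkdvd : ∀ f : X → ℝ,
      (∀ z, ∀ n : ℕ, 1 ≤ n → ζ z ∣ n → ∃ k : ℤ, f z = (k:ℝ)/(n:ℝ)) →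
      ∀ z, den (f z) ∣ ζ z := by
    intro f htr z
    rcases Nat.eq_zero_or_pos (ζ z) with h0 | hpos
    · rw [h0]; exact dvd_zero _
    · obtain ⟨k, hk⟩ := htr z (ζ z) hpos dvd_rfl
      rw [hk]
      exact den_int_div k (ζ z) hpos
  -- constant zero element
  have const0 : ∃ i : I, ∀ z, i.1 z = 0 := by
    refine ⟨⟨fun _ => (0:ℝ), continuous_const, fun z => by norm_num, fun z => ?_⟩, fun z => rfl⟩
    rw [den_zero]
    exact one_dvd _
  -- separation
  have hsep : ∀ x₀ y₀ : X, x₀ ≠ y₀ → ∃ i : I, i.1 x₀ ≠ i.1 y₀ := by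
    intro x₀ y₀ hne
    obtain ⟨f, hc, hicc, htr, hfx, hfy⟩ := urysohn_a hX hne (le_refl (0:ℚ))
      (by norm_num) (by norm_num)
    refine ⟨⟨f, hc, hicc, mkdvd f htr⟩, ?_⟩
    show f x₀ ≠ f y₀
    rw [hfx, hfy]
    norm_num
  -- attainment
  have hatt : ∀ (x₀ : X) (k : ℕ), 1 ≤ k → (k ∣ ζ x₀ ∨ ζ x₀ = 0) →
      ∃ i : I, den (i.1 x₀) = k := by
    intro x₀ k hk hdvd
    rcases eq_or_lt_of_le hk with h1 | h2
    · obtain ⟨i, hi⟩ := const0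
      refine ⟨i, ?_⟩
      rw [hi x₀, den_zero, h1]
    · -- k ≥ 2
      have hden : ((1:ℚ)/(k:ℚ)).den ∣ ζ x₀ := by
        rw [den_one_div_den k hk]
        rcases hdvd with h | h
        · exact h
        · rw [h]; exact dvd_zero _
      have hα0 : (0:ℚ) ≤ (1:ℚ)/(k:ℚ) := by positivity
      have hα1 : (1:ℚ)/(k:ℚ) < 1 := by
        rw [div_lt_one (by exact_mod_cast hk : (0:ℚ) < (k:ℚ))]
        exact_mod_cast h2
      by_cases hsing : ∃ y₀ : X, y₀ ≠ x₀
      · obtain ⟨y₀, hy₀⟩ := hsing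
        obtain ⟨f, hc, hicc, htr, hfx, hfy⟩ := urysohn_a hX (Ne.symm hy₀) hα0 hα1 hden
        refine ⟨⟨f, hc, hicc, mkdvd f htr⟩, ?_⟩
        show den (f x₀) = k
        rw [hfx]
        exact den_inv_nat k hk
      · push_neg at hsing
        refine ⟨⟨fun _ => (((1:ℚ)/(k:ℚ) : ℚ) : ℝ), continuous_const, fun z => ?_, fun z => ?_⟩, ?_⟩
        · show (((1:ℚ)/(k:ℚ) : ℚ) : ℝ) ∈ Set.Icc (0:ℝ) 1
          constructor
          · positivity
          · have : ((1:ℚ)/(k:ℚ)) ≤ 1 := le_of_lt hα1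
            exact_mod_cast this
        · show den ((((1:ℚ)/(k:ℚ) : ℚ) : ℝ)) ∣ ζ z
          rw [den_inv_nat k hk]
          rw [hsing z]
          rcases hdvd with h | h
          · exact h
          · rw [h]; exact dvd_zero _
        · show den ((((1:ℚ)/(k:ℚ) : ℚ) : ℝ)) = k
          exact den_inv_nat k hk
  -- properties of g
  have hg01 : ∀ (z : X) (i : I), g z i ∈ Set.Icc (0:ℝ) 1 := fun z i => i.2.2.1 z
  have hginj : Function.Injective g := by
    intro z w h
    by_contra hne
    obtain ⟨i, hi⟩ := hsep z w hne
    exact hi (congrFun h i)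
  have hgcont : Continuous g := continuous_pi (fun i => i.2.1)
  have hgclosed : IsClosedMap g := hgcont.isClosedMap
  have hdenV : ∀ z, denV (g z) = ζ z := by
    intro z
    apply setLcm_eq
    · rintro s ⟨i, rfl⟩
      exact i.2.2.2 z
    · intro m hm
      rcases Nat.eq_zero_or_pos (ζ z) with h0 | hpos
      · rw [h0]
        have hall : ∀ k : ℕ, 1 ≤ k → k ∣ m := by
          intro k hk
          obtain ⟨i, hi⟩ := hatt z k hk (Or.inr h0)
          have := hm (den (i.1 z)) ⟨i, rfl⟩
          rwa [hi] at this
        rcases Nat.eq_zero_or_pos m with rfl | hmpos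
        · exact dvd_zero _
        · exfalso
          have := Nat.le_of_dvd hmpos (hall (m+1) (by omega))
          omega
      · obtain ⟨i, hi⟩ := hatt z (ζ z) hpos (Or.inl dvd_rfl)
        have := hm (den (i.1 z)) ⟨i, rfl⟩
        rwa [hi] at this
  have hrange : IsClosed (Set.range g) := by
    rw [← Set.image_univ]
    exact hgclosed _ isClosed_univ
  have hce : Topology.IsClosedEmbedding g :=
    Topology.IsClosedEmbedding.of_continuous_injective_isClosedMap hgcont hginj hgclosed
  refine ⟨I, g, hg01, hginj, hgcont, hgclosed, hdenV, hrange,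
    hce.toIsEmbedding.toHomeomorph, fun z => rfl⟩
end
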